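/- arXiv:1401.7189 — 5 statements merged into one kernel-verified Lean document; each statement's English description precedes it below -/
import Mathlib

section
/- For all integers a, b and positive integer c, if gcd(a,c) > 1 and gcd(a,c) does not divide b, then the quadratic Gauss sum G(a,b,c) = sum_{n=0}^{c-1} e^{2πi(an²+bn)/c} equals 0. -/
open Complex

theorem gauss_sum_vanish_gcd (a b : ℤ) (c : ℕ) (hc : 0 < c)
    (h1 : 1 < Int.gcd a (c : ℤ)) (h2 : ¬ ((Int.gcd a (c : ℤ) : ℤ) ∣ b)) :
    ∑ n ∈ Finset.range c,
      Complex.exp (2 * Real.pi * I * ((a : ℂ) * (n : ℂ) ^ 2 + (b : ℂ) * (n : ℂ)) / (c : ℂ)) = 0 := by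
  haveI : NeZero c := ⟨hc.ne'⟩
  set d : ℕ := Int.gcd a (c : ℤ) with hd
  have hd0 : 0 < d := lt_trans one_pos h1
  have hdc : d ∣ c := by exact_mod_cast (Int.gcd_dvd_right a (c : ℤ) : (Int.gcd a (c : ℤ) : ℤ) ∣ (c : ℤ))
  have hda : (d : ℤ) ∣ a := Int.gcd_dvd_left a (c : ℤ)
  obtain ⟨m, hm⟩ := hdc
  obtain ⟨a₁, ha₁⟩ := hda
  have hm0 : 0 < m := by
    rcases Nat.eq_zero_or_pos m with h | h
    · rw [h, mul_zero] at hm; omega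
    · exact h
  have hcC : (c : ℂ) ≠ 0 := by exact_mod_cast hc.ne'
  set f : ℤ → ℂ := fun n =>
    Complex.exp (2 * Real.pi * I * ((a : ℂ) * (n : ℂ) ^ 2 + (b : ℂ) * (n : ℂ)) / (c : ℂ)) with hf
  -- congruence lemma
  have hcong : ∀ n k : ℤ, (c : ℤ) ∣ (n - k) → f n = f k := by
    intro n k hdvd
    obtain ⟨t, ht⟩ := hdvd
    have hn : (n : ℂ) = (k : ℂ) + (c : ℂ) * (t : ℂ) := by
      have : n = k + c * t := by linarith [ht]
      rw [this]; push_cast; ring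
    have key : 2 * (Real.pi : ℂ) * I * ((a : ℂ) * (n : ℂ) ^ 2 + (b : ℂ) * (n : ℂ)) / (c : ℂ)
        = 2 * (Real.pi : ℂ) * I * ((a : ℂ) * (k : ℂ) ^ 2 + (b : ℂ) * (k : ℂ)) / (c : ℂ)
          + ((2 * a * k * t + a * c * t ^ 2 + b * t : ℤ) : ℂ) * (2 * Real.pi * I) := by
      rw [hn]; push_cast; field_simp; ring
    show Complex.exp _ = Complex.exp _
    rw [key, Complex.exp_add, Complex.exp_int_mul_two_pi_mul_I, mul_one]
  -- shift lemma
  set E : ℂ := Complex.exp (2 * Real.pi * I * ((b : ℂ) * (m : ℂ)) / (c : ℂ)) with hE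
  have hshift : ∀ n : ℤ, f (n + (m : ℤ)) = E * f n := by
    intro n
    have hamc : (a : ℂ) * (m : ℂ) = (a₁ : ℂ) * (c : ℂ) := by
      have : a * (m : ℤ) = a₁ * (c : ℤ) := by
        rw [ha₁, hm]; push_cast; ring
      exact_mod_cast congrArg (Int.cast : ℤ → ℂ) this
    have key : 2 * (Real.pi : ℂ) * I * ((a : ℂ) * ((n : ℂ) + (m : ℂ)) ^ 2
          + (b : ℂ) * ((n : ℂ) + (m : ℂ))) / (c : ℂ)
        = 2 * (Real.pi : ℂ) * I * ((b : ℂ) * (m : ℂ)) / (c : ℂ)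
          + 2 * (Real.pi : ℂ) * I * ((a : ℂ) * (n : ℂ) ^ 2 + (b : ℂ) * (n : ℂ)) / (c : ℂ)
          + ((2 * a₁ * n + a₁ * m : ℤ) : ℂ) * (2 * Real.pi * I) := by
      have expand : (a : ℂ) * ((n : ℂ) + (m : ℂ)) ^ 2 + (b : ℂ) * ((n : ℂ) + (m : ℂ))
          = ((a : ℂ) * (n : ℂ) ^ 2 + (b : ℂ) * (n : ℂ)) + (b : ℂ) * (m : ℂ)
            + ((a : ℂ) * (m : ℂ)) * (2 * (n : ℂ) + (m : ℂ)) := by ring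
      rw [expand, hamc]; push_cast; field_simp; ring
    show Complex.exp _ = E * Complex.exp _
    push_cast
    rw [key, Complex.exp_add, Complex.exp_add, Complex.exp_int_mul_two_pi_mul_I, mul_one, hE]
  -- rewrite the sum as sum of f over range c
  have hsum1 : ∑ n ∈ Finset.range c,
      Complex.exp (2 * Real.pi * I * ((a : ℂ) * (n : ℂ) ^ 2 + (b : ℂ) * (n : ℂ)) / (c : ℂ))
      = ∑ n ∈ Finset.range c, f ((n : ℤ)) := by
    apply Finset.sum_congr rfl
    intro n _
    rw [hf]; push_cast; ring_nf
  rw [hsum1]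
  set g : ZMod c → ℂ := fun x => f ((x.val : ℤ)) with hg
  have hsum2 : ∑ n ∈ Finset.range c, f ((n : ℤ)) = ∑ x : ZMod c, g x := by
    refine Finset.sum_nbij' (fun n => (n : ZMod c)) (fun x => x.val) ?_ ?_ ?_ ?_ ?_
    · intro n _; exact Finset.mem_univ _
    · intro x _; exact Finset.mem_range.mpr (ZMod.val_lt x)
    · intro n hn; exact ZMod.val_natCast_of_lt (Finset.mem_range.mp hn)
    · intro x _; exact ZMod.natCast_rightInverse x
    · intro n hn
      rw [hg]
      simp only
      rw [ZMod.val_natCast_of_lt (Finset.mem_range.mp hn)]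
  rw [hsum2]
  -- the shifted sum equals the original sum
  have hsum3 : ∑ x : ZMod c, g x = ∑ x : ZMod c, g (x + (m : ZMod c)) :=
    (Equiv.sum_comp (Equiv.addRight ((m : ZMod c))) g).symm
  have hterm : ∀ x : ZMod c, g (x + (m : ZMod c)) = E * g x := by
    intro x
    have h1' : ((x + (m : ZMod c)).val : ZMod c) = ((x.val + m : ℕ) : ZMod c) := by
      push_cast
      rw [ZMod.natCast_rightInverse x, ZMod.natCast_rightInverse (x + (m : ZMod c))]
    have h2' : (c : ℤ) ∣ (((x + (m : ZMod c)).val : ℤ) - ((x.val + m : ℕ) : ℤ)) := by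
      have := (ZMod.natCast_eq_natCast_iff _ _ _).mp h1'
      exact_mod_cast (Nat.ModEq.dvd this.symm)
    calc g (x + (m : ZMod c)) = f (((x.val + m : ℕ) : ℤ)) := hcong _ _ h2'
      _ = f ((x.val : ℤ) + (m : ℤ)) := by push_cast; ring_nf
      _ = E * g x := hshift _
  have hES : ∑ x : ZMod c, g x = E * ∑ x : ZMod c, g x := by
    conv_lhs => rw [hsum3]
    rw [Finset.sum_congr rfl (fun x _ => hterm x), ← Finset.mul_sum]
  have hEne : E ≠ 1 := by
    intro hE1
    rw [hE, Complex.exp_eq_one_iff] at hE1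
    obtain ⟨n, hn⟩ := hE1
    have h2pi : (2 * (Real.pi : ℂ) * I) ≠ 0 := by
      simp [Real.pi_ne_zero, Complex.I_ne_zero]
    have h' : 2 * (Real.pi : ℂ) * I * ((b : ℂ) * (m : ℂ))
        = 2 * (Real.pi : ℂ) * I * ((n : ℂ) * (c : ℂ)) := by
      have h := congrArg (fun z => z * (c : ℂ)) hn
      rw [div_mul_cancel₀ _ hcC] at h
      linear_combination h
    have hbm : (b : ℂ) * (m : ℂ) = (n : ℂ) * (c : ℂ) := mul_left_cancel₀ h2pi h' 
    have hbmZ : b * (m : ℤ) = n * (c : ℤ) := by exact_mod_cast hbm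
    have : (d : ℤ) ∣ b := by
      refine ⟨n, ?_⟩
      have hmZ : (m : ℤ) ≠ 0 := by exact_mod_cast hm0.ne'
      apply mul_right_cancel₀ hmZ
      rw [hbmZ, hm]; push_cast; ring
    exact h2 this
  have : (E - 1) * ∑ x : ZMod c, g x = 0 := by
    rw [sub_mul, one_mul, ← hES, sub_self]
  rcases mul_eq_zero.mp this with h | h
  · exact absurd (sub_eq_zero.mp h) hEne
  · exact h
end

section
/- For all integers a, b and positive integer c, if c ≡ 0 (mod 4) and b is odd, then the quadratic Gauss sum G(a,b,c) = sum_{n=0}^{c-1} e^{2πi(an²+bn)/c} equals 0. -/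
open Complex

theorem gauss_sum_vanish_four (a b : ℤ) (c : ℕ) (hc : 0 < c)
    (h4 : c % 4 = 0) (hb : Odd b) :
    ∑ n ∈ Finset.range c,
      Complex.exp (2 * Real.pi * I * ((a : ℂ) * (n : ℂ) ^ 2 + (b : ℂ) * (n : ℂ)) / (c : ℂ)) = 0 := by
  obtain ⟨k, hk⟩ := Nat.dvd_of_mod_eq_zero h4
  subst hk
  have hk0 : 0 < k := by omega
  obtain ⟨j, hj⟩ := hb
  subst hj
  have hkC : (k : ℂ) ≠ 0 := Nat.cast_ne_zero.mpr hk0.ne'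
  have h2 : 4 * k = 2 * k + 2 * k := by ring
  rw [h2, Finset.sum_range_add]
  have key : ∀ n : ℕ,
      Complex.exp (2 * Real.pi * I * ((a : ℂ) * ((2 * k + n : ℕ) : ℂ) ^ 2 +
        ((2 * j + 1 : ℤ) : ℂ) * ((2 * k + n : ℕ) : ℂ)) / ((2 * k + 2 * k : ℕ) : ℂ)) =
      - Complex.exp (2 * Real.pi * I * ((a : ℂ) * (n : ℂ) ^ 2 +
        ((2 * j + 1 : ℤ) : ℂ) * (n : ℂ)) / ((2 * k + 2 * k : ℕ) : ℂ)) := by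
    intro n
    have harg : 2 * (Real.pi : ℂ) * I * ((a : ℂ) * ((2 * k + n : ℕ) : ℂ) ^ 2 +
        ((2 * j + 1 : ℤ) : ℂ) * ((2 * k + n : ℕ) : ℂ)) / ((2 * k + 2 * k : ℕ) : ℂ) =
        2 * (Real.pi : ℂ) * I * ((a : ℂ) * (n : ℂ) ^ 2 +
        ((2 * j + 1 : ℤ) : ℂ) * (n : ℂ)) / ((2 * k + 2 * k : ℕ) : ℂ) +
        (((a * n + a * k + j : ℤ) : ℂ) * (2 * (Real.pi : ℂ) * I) + (Real.pi : ℂ) * I) := by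
      push_cast
      field_simp
      ring
    rw [harg, Complex.exp_add, Complex.exp_add, Complex.exp_int_mul_two_pi_mul_I,
      Complex.exp_pi_mul_I]
    ring
  rw [Finset.sum_congr rfl fun n _ => key n, Finset.sum_neg_distrib]
  ring
end

section
/- For N an even positive integer with N ≥ 4, the determinant of the (N/2−1)×(N/2−1) matrix whose (k,ℓ) entry is (2(−i)^{3/2}/√N)·sin(2πℓk/N), for 1 ≤ k, ℓ ≤ N/2−1, equals (−i)^{(N−1)(N−2)/4}. -/
open Complex Finset Real Matrix Polynomial Polynomial.Chebyshev

lemma C2 : (2 * X : ℝ[X]) = C 2 * X := by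
  rw [show (2 : ℝ[X]) = C 2 from (map_ofNat Polynomial.C 2).symm]

lemma U_deg_lead (m : ℕ) : (U ℝ m).natDegree = m ∧ (U ℝ m).leadingCoeff = 2 ^ m := by
  have key : ∀ m : ℕ, ((U ℝ m).natDegree = m ∧ (U ℝ m).leadingCoeff = 2 ^ m) ∧
      ((U ℝ (m + 1)).natDegree = m + 1 ∧ (U ℝ (m + 1)).leadingCoeff = 2 ^ (m + 1)) := by
    intro m
    induction m with
    | zero =>
      refine ⟨⟨by simp, by simp⟩, ?_, ?_⟩
      · rw [show ((0:ℕ):ℤ) + 1 = 1 by ring, U_one, C2,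
          natDegree_C_mul (by norm_num), natDegree_X]
      · rw [show ((0:ℕ):ℤ) + 1 = 1 by ring, U_one, C2, leadingCoeff_mul,
          leadingCoeff_C, leadingCoeff_X]
        norm_num
    | succ m ih =>
      refine ⟨ih.2, ?_, ?_⟩
      all_goals {
        have hrec : U ℝ (((m:ℕ)+1 : ℕ) + 1) = 2 * X * U ℝ ((m:ℤ) + 1) - U ℝ m := by
          have := U_add_two ℝ (m : ℤ)
          convert this using 2 <;> push_cast <;> ring
        have hUne : U ℝ ((m:ℤ) + 1) ≠ 0 := by
          intro h
          have h2 := ih.2.2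
          rw [h] at h2
          simp at h2
          exact absurd h2.symm (by positivity)
        have hmul_deg : (2 * X * U ℝ ((m:ℤ) + 1)).natDegree = m + 2 := by
          rw [C2, mul_assoc, natDegree_C_mul (by norm_num), natDegree_X_mul hUne, ih.2.1]
        have hUm_deg : (U ℝ (m:ℤ)).natDegree = m := ih.1.1
        have hdeglt : (U ℝ (m:ℤ)).natDegree < (2 * X * U ℝ ((m:ℤ) + 1)).natDegree := by
          omega
        rw [hrec]
        first
        | · rw [natDegree_sub_eq_left_of_natDegree_lt hdeglt, hmul_deg]
        | · rw [leadingCoeff_sub_of_degree_lt (degree_lt_degree hdeglt), C2, mul_assoc,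
              leadingCoeff_mul, leadingCoeff_mul, leadingCoeff_C, leadingCoeff_X, ih.2.2]
            ring
      }
  exact (key m).1

lemma cos_sum (n : ℕ) (hn : 0 < n) (m : ℤ) (hm : m ≠ 0) (hlt : m.natAbs < 2 * n) :
    ∑ k ∈ Finset.range n, Real.cos (Real.pi * m / n * k) = if Even m then 0 else 1 := by
  set θ : ℝ := Real.pi * m / n with hθ
  set ω : ℂ := Complex.exp (θ * Complex.I) with hω
  have hnne : ((n:ℂ)) ≠ 0 := by exact_mod_cast hn.ne'
  have hωk : ∀ k : ℕ, ω ^ k = Complex.exp ((θ * k : ℝ) * Complex.I) := by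
    intro k
    rw [hω, ← Complex.exp_nat_mul]
    push_cast
    ring_nf
  have hωne : ω ≠ 1 := by
    intro h
    rw [hω, Complex.exp_eq_one_iff] at h
    obtain ⟨k, hk⟩ := h
    have hπ : (Real.pi : ℂ) ≠ 0 := by exact_mod_cast Real.pi_ne_zero
    have hθc : (θ:ℂ) = k * (2 * Real.pi) := by
      have := mul_right_cancel₀ Complex.I_ne_zero (hk.trans (by ring : ((k:ℂ)) * (2 * ↑Real.pi * Complex.I) = (k * (2 * Real.pi)) * Complex.I))
      exact this
    have hθr : θ = k * (2 * Real.pi) := by exact_mod_cast hθc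
    have hnr : ((n:ℝ)) ≠ 0 := by exact_mod_cast hn.ne'
    rw [hθ] at hθr
    have hπm : Real.pi * m = Real.pi * (2 * k * n) := by
      field_simp at hθr
      linear_combination Real.pi * hθr
    have : (m : ℝ) = 2 * k * n := mul_left_cancel₀ Real.pi_ne_zero hπm
    have hm2 : m = 2 * k * n := by exact_mod_cast this
    have hnz : (0:ℤ) < n := by exact_mod_cast hn
    rcases lt_trichotomy k 0 with h | h | h
    · have : m ≤ -(2 * n) := by rw [hm2]; nlinarith
      omega
    · simp [h] at hm2; exact hm hm2
    · have : (2 * n : ℤ) ≤ m := by rw [hm2]; nlinarith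
      omega
  have hωinv : ω⁻¹ = Complex.exp (-(θ * Complex.I)) := by rw [hω, ← Complex.exp_neg]
  have hconj : (starRingEnd ℂ) ω = ω⁻¹ := by
    rw [hω, hωinv, ← Complex.exp_conj]
    congr 1
    simp
  have hωinv_ne : ω⁻¹ ≠ 1 := fun h => hωne (by rw [← inv_inv ω, h, inv_one])
  have hωn : ω ^ n = Complex.exp (Real.pi * m * Complex.I) := by
    rw [hωk n, hθ]
    congr 1
    push_cast
    field_simp
  set E1 : ℂ := ∑ k ∈ Finset.range n, ω ^ k with hE1
  set E2 : ℂ := ∑ k ∈ Finset.range n, (ω⁻¹) ^ k with hE2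
  have hconjE : (starRingEnd ℂ) E1 = E2 := by
    rw [hE1, map_sum]
    exact Finset.sum_congr rfl fun k _ => by rw [map_pow, hconj]
  have hkey : E1 + E2 = if Even m then 0 else 2 := by
    by_cases hev : Even m
    · obtain ⟨j, hj⟩ := hev
      have hωn1 : ω ^ n = 1 := by
        rw [hωn, show (Real.pi:ℂ) * m * Complex.I = j * (2 * Real.pi * Complex.I) by
          push_cast [hj]; ring, Complex.exp_int_mul_two_pi_mul_I]
      rw [hE1, hE2, geom_sum_eq hωne, geom_sum_eq hωinv_ne, inv_pow, hωn1, if_pos ⟨j, hj⟩]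
      simp
    · obtain ⟨j, hj⟩ := Int.not_even_iff_odd.mp hev
      have hωn1 : ω ^ n = -1 := by
        rw [hωn, show (Real.pi:ℂ) * m * Complex.I
            = j * (2 * Real.pi * Complex.I) + Real.pi * Complex.I by push_cast [hj]; ring,
          Complex.exp_add, Complex.exp_int_mul_two_pi_mul_I, Complex.exp_pi_mul_I]
        ring
      rw [hE1, hE2, geom_sum_eq hωne, geom_sum_eq hωinv_ne, inv_pow, hωn1]
      have hω0 : ω ≠ 0 := Complex.exp_ne_zero _
      have hs1 : ω - 1 ≠ 0 := sub_ne_zero.mpr hωne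
      have hs2 : ω⁻¹ - 1 ≠ 0 := sub_ne_zero.mpr hωinv_ne
      have hs1' : (1:ℂ) - ω ≠ 0 := fun h => hωne (by linear_combination -h)
      simp only [hev, if_false]
      field_simp
      ring
  have hre : ∑ k ∈ Finset.range n, Real.cos (θ * k) = E1.re := by
    rw [hE1, Complex.re_sum]
    refine Finset.sum_congr rfl fun k _ => ?_
    rw [hωk k, Complex.exp_ofReal_mul_I_re]
  have h2re : (2 : ℂ) * E1.re = E1 + E2 := by
    rw [← hconjE, Complex.add_conj]
    norm_num
  rw [hre]
  by_cases hev : Even m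
  · simp only [hev, if_true] at hkey ⊢
    have : (2:ℂ) * E1.re = 0 := by rw [h2re, hkey]
    have h0 : (E1.re : ℂ) = 0 := by linear_combination this / 2
    exact_mod_cast h0
  · simp only [hev, if_false] at hkey ⊢
    have : (2:ℂ) * E1.re = 2 := by rw [h2re, hkey]
    have h1 : (E1.re : ℂ) = 1 := by linear_combination this / 2
    exact_mod_cast h1

lemma sin_orth (n : ℕ) (hn : 0 < n) (a b : ℕ) (ha : 0 < a) (han : a < n)
    (hb : 0 < b) (hbn : b < n) :
    ∑ k ∈ Finset.range n, Real.sin (Real.pi * a / n * k) * Real.sin (Real.pi * b / n * k) =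
      if a = b then (n : ℝ) / 2 else 0 := by
  have hnr : (n:ℝ) ≠ 0 := by exact_mod_cast hn.ne'
  have key : ∀ k : ℕ, Real.sin (Real.pi * a / n * k) * Real.sin (Real.pi * b / n * k)
      = (Real.cos (Real.pi * ((a:ℤ)-b) / n * k) - Real.cos (Real.pi * ((a:ℤ)+b) / n * k)) / 2 := by
    intro k
    have h := Real.cos_sub_cos (Real.pi * ((a:ℤ)-b) / n * k) (Real.pi * ((a:ℤ)+b) / n * k)
    rw [show (Real.pi * ((a:ℤ)-b) / n * k + Real.pi * ((a:ℤ)+b) / n * k) / 2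
          = Real.pi * a / n * k by push_cast; field_simp; ring,
        show (Real.pi * ((a:ℤ)-b) / n * k - Real.pi * ((a:ℤ)+b) / n * k) / 2
          = -(Real.pi * b / n * k) by push_cast; field_simp; ring,
        Real.sin_neg] at h
    linarith
  rw [Finset.sum_congr rfl (fun k _ => key k), ← Finset.sum_div, Finset.sum_sub_distrib]
  by_cases hab : a = b
  · subst hab
    have h1 : ∑ k ∈ Finset.range n, Real.cos (Real.pi * ((a:ℤ)-a) / n * k) = n := by
      simp
    have h2 : ∑ k ∈ Finset.range n, Real.cos (Real.pi * ((a:ℤ)+a) / n * k) = 0 := by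
      have h := cos_sum n hn ((a:ℤ)+a) (by omega) (by omega)
      rw [if_pos ⟨(a:ℤ), rfl⟩] at h
      rw [← h]
      refine Finset.sum_congr rfl fun k _ => ?_
      norm_cast
    rw [h1, h2, if_pos rfl]
    ring
  · have hm1 : ((a:ℤ) - b) ≠ 0 := by omega
    have h1 := cos_sum n hn ((a:ℤ)-b) hm1 (by omega)
    have h2 := cos_sum n hn ((a:ℤ)+b) (by omega) (by omega)
    have hpar : Even ((a:ℤ)-b) ↔ Even ((a:ℤ)+b) := by
      constructor <;> intro ⟨j, hj⟩
      · exact ⟨j + b, by omega⟩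
      · exact ⟨j - b, by omega⟩
    rw [show (∑ x ∈ Finset.range n, Real.cos (Real.pi * ((a:ℤ)-b) / n * x))
          = ∑ k ∈ Finset.range n, Real.cos (Real.pi * (((a:ℤ)-b : ℤ) : ℝ) / n * k) from
        Finset.sum_congr rfl fun k _ => by norm_cast,
      show (∑ x ∈ Finset.range n, Real.cos (Real.pi * ((a:ℤ)+b) / n * x))
          = ∑ k ∈ Finset.range n, Real.cos (Real.pi * (((a:ℤ)+b : ℤ) : ℝ) / n * k) from
        Finset.sum_congr rfl fun k _ => by norm_cast,
      h1, h2, if_neg hab]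
    by_cases he : Even ((a:ℤ)-b)
    · rw [if_pos he, if_pos (hpar.mp he)]; ring
    · rw [if_neg he, if_neg (fun h => he (hpar.mpr h))]; ring

lemma detA_eq (n : ℕ) (hn : 2 ≤ n) :
    ∃ E : ℕ, 2 * E = (n - 1) * (n - 2) ∧
      Matrix.det (Matrix.of fun k ℓ : Fin (n - 1) =>
          Real.sin (Real.pi * ((ℓ:ℕ) + 1) * ((k:ℕ) + 1) / n))
        = (-1) ^ E * Real.sqrt (((n:ℝ) / 2) ^ (n - 1)) := by
  have hn0 : 0 < n := by omega
  have hnr : (n:ℝ) ≠ 0 := by exact_mod_cast hn0.ne'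
  set M := n - 1 with hM
  set A : Matrix (Fin M) (Fin M) ℝ :=
    Matrix.of (fun k ℓ : Fin M => Real.sin (Real.pi * ((ℓ:ℕ) + 1) * ((k:ℕ) + 1) / n)) with hA
  -- orthogonality
  have horth : Aᵀ * A = ((n:ℝ) / 2) • (1 : Matrix (Fin M) (Fin M) ℝ) := by
    ext ℓ ℓ'
    rw [Matrix.mul_apply]
    have hterm : ∀ k : Fin M, Aᵀ ℓ k * A k ℓ' =
        Real.sin (Real.pi * ((ℓ:ℕ)+1) / n * ((k:ℕ)+1)) *
        Real.sin (Real.pi * ((ℓ':ℕ)+1) / n * ((k:ℕ)+1)) := by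
      intro k
      rw [Matrix.transpose_apply, hA]
      simp only [Matrix.of_apply]
      congr 1 <;> congr 1 <;> field_simp <;> ring
    rw [Finset.sum_congr rfl (fun k _ => hterm k)]
    have hext : ∑ k : Fin M, Real.sin (Real.pi * ((ℓ:ℕ)+1) / n * ((k:ℕ)+1)) *
        Real.sin (Real.pi * ((ℓ':ℕ)+1) / n * ((k:ℕ)+1))
        = ∑ k ∈ Finset.range n, Real.sin (Real.pi * (((ℓ:ℕ)+1 : ℕ) : ℝ) / n * k) *
            Real.sin (Real.pi * (((ℓ':ℕ)+1 : ℕ) : ℝ) / n * k) := by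
      rw [show n = M + 1 by omega, Finset.sum_range_succ']
      simp only [Nat.cast_zero, mul_zero, Real.sin_zero, zero_mul, mul_zero, add_zero]
      push_cast
      rw [Fin.sum_univ_eq_sum_range (fun k : ℕ =>
        Real.sin (Real.pi * ((ℓ:ℕ)+1) / (M+1) * ((k:ℝ)+1)) *
        Real.sin (Real.pi * ((ℓ':ℕ)+1) / (M+1) * ((k:ℝ)+1))) M]
    rw [hext, sin_orth n hn0 ((ℓ:ℕ)+1) ((ℓ':ℕ)+1) (by omega) (by omega) (by omega) (by omega)]
    rw [Matrix.smul_apply, Matrix.one_apply]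
    by_cases h : ℓ = ℓ'
    · simp [h]
    · rw [if_neg (by simpa [Fin.ext_iff] using h), if_neg h]
      simp
  -- determinant squared
  have hsq : (Matrix.det A) ^ 2 = ((n:ℝ) / 2) ^ M := by
    have hd := congrArg Matrix.det horth
    rw [Matrix.det_mul, Matrix.det_transpose, Matrix.det_smul, Matrix.det_one,
      Fintype.card_fin, mul_one] at hd
    rw [← hd]; ring
  -- Chebyshev factorization
  set θ : Fin M → ℝ := fun k => Real.pi * ((k:ℕ) + 1) / n with hθ
  set x : Fin M → ℝ := fun k => Real.cos (θ k) with hx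
  set p : Fin M → ℝ[X] := fun ℓ => C (((2:ℝ) ^ (ℓ:ℕ))⁻¹) * U ℝ (ℓ:ℕ) with hp
  have h_deg : ∀ ℓ : Fin M, (p ℓ).natDegree = ℓ := by
    intro ℓ
    rw [hp, natDegree_C_mul (inv_ne_zero (by positivity)), (U_deg_lead ℓ).1]
  have h_monic : ∀ ℓ : Fin M, (p ℓ).Monic := by
    intro ℓ
    unfold Polynomial.Monic
    rw [hp, leadingCoeff_mul, leadingCoeff_C, (U_deg_lead ℓ).2]
    field_simp
  have hθpos : ∀ k : Fin M, 0 < θ k := by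
    intro k
    rw [hθ]
    have : (0:ℝ) < (k:ℕ) + 1 := by positivity
    positivity
  have hθlt : ∀ k : Fin M, θ k < Real.pi := by
    intro k
    rw [hθ]
    rw [div_lt_iff₀ (by exact_mod_cast hn0)]
    have hk : ((k:ℕ):ℝ) + 1 < (n:ℝ) := by
      have := k.isLt
      have : (k:ℕ) + 1 < n := by omega
      exact_mod_cast this
    nlinarith [Real.pi_pos]
  have hsinpos : ∀ k : Fin M, 0 < Real.sin (θ k) :=
    fun k => Real.sin_pos_of_pos_of_lt_pi (hθpos k) (hθlt k)
  have hAfact : A = Matrix.of (fun k ℓ : Fin M =>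
      Real.sin (θ k) * ((2:ℝ) ^ (ℓ:ℕ) * (p ℓ).eval (x k))) := by
    ext k ℓ
    simp only [Matrix.of_apply, hA, hp, hx, eval_mul, eval_C]
    rw [show (2:ℝ) ^ (ℓ:ℕ) * (((2:ℝ) ^ (ℓ:ℕ))⁻¹ * (U ℝ (ℓ:ℕ)).eval (Real.cos (θ k)))
        = (U ℝ (ℓ:ℕ)).eval (Real.cos (θ k)) by field_simp]
    have hU := U_real_cos (θ k) (ℓ:ℕ)
    rw [mul_comm] at hU
    rw [hU]
    congr 1
    rw [hθ]
    push_cast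
    field_simp
  have hdetfact : Matrix.det A = (∏ k : Fin M, Real.sin (θ k)) *
      ((∏ ℓ : Fin M, (2:ℝ) ^ (ℓ:ℕ)) * Matrix.det (Matrix.vandermonde x)) := by
    rw [hAfact]
    rw [show Matrix.of (fun k ℓ : Fin M =>
        Real.sin (θ k) * ((2:ℝ) ^ (ℓ:ℕ) * (p ℓ).eval (x k)))
        = Matrix.of (fun k ℓ : Fin M =>
          Real.sin (θ k) * (Matrix.of fun k ℓ : Fin M => ((2:ℝ) ^ (ℓ:ℕ) * (p ℓ).eval (x k))) k ℓ)
        from rfl]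
    rw [Matrix.det_mul_column]
    congr 1
    rw [show Matrix.of (fun k ℓ : Fin M => ((2:ℝ) ^ (ℓ:ℕ) * (p ℓ).eval (x k)))
        = Matrix.of (fun k ℓ : Fin M =>
          (2:ℝ) ^ (ℓ:ℕ) * (Matrix.of fun k ℓ : Fin M => (p ℓ).eval (x k)) k ℓ) from rfl]
    rw [Matrix.det_mul_row]
    congr 1
    exact (Matrix.det_eval_matrixOfPolynomials_eq_det_vandermonde x p h_deg h_monic).symm
  -- sign analysis
  have hxanti : ∀ i j : Fin M, i < j → x j < x i := by
    intro i j hij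
    rw [hx]
    refine Real.cos_lt_cos_of_nonneg_of_le_pi (hθpos i).le (hθlt j).le ?_
    rw [hθ]
    have hij' : ((i:ℕ):ℝ) < ((j:ℕ):ℝ) := by exact_mod_cast hij
    have hnpos : (0:ℝ) < n := by exact_mod_cast hn0
    apply div_lt_div_of_pos_right ?_ hnpos
    nlinarith [Real.pi_pos]
  set E : ℕ := ∑ i : Fin M, (Finset.Ioi i).card with hE
  have hneg1 : ((-1:ℝ)^E) * ((-1:ℝ)^E) = 1 := by
    rw [← pow_add]
    exact Even.neg_one_pow ⟨E, rfl⟩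
  have hvand : Matrix.det (Matrix.vandermonde x)
      = (-1)^E * ∏ i : Fin M, ∏ j ∈ Finset.Ioi i, (x i - x j) := by
    rw [Matrix.det_vandermonde]
    calc ∏ i : Fin M, ∏ j ∈ Finset.Ioi i, (x j - x i)
        = ∏ i : Fin M, ((-1)^(Finset.Ioi i).card * ∏ j ∈ Finset.Ioi i, (x i - x j)) := by
          refine Finset.prod_congr rfl fun i _ => ?_
          rw [← Finset.prod_const (-1:ℝ), ← Finset.prod_mul_distrib]
          exact Finset.prod_congr rfl fun j _ => by ring
      _ = (-1)^E * ∏ i : Fin M, ∏ j ∈ Finset.Ioi i, (x i - x j) := by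
          rw [Finset.prod_mul_distrib, Finset.prod_pow_eq_pow_sum]
  have hVpos : 0 < ∏ i : Fin M, ∏ j ∈ Finset.Ioi i, (x i - x j) :=
    Finset.prod_pos fun i _ => Finset.prod_pos fun j hj =>
      sub_pos.mpr (hxanti i j (Finset.mem_Ioi.mp hj))
  have hsign : 0 < (-1:ℝ)^E * Matrix.det A := by
    have hcalc : (-1:ℝ)^E * Matrix.det A
        = ((∏ k : Fin M, Real.sin (θ k)) * (∏ ℓ : Fin M, (2:ℝ) ^ (ℓ:ℕ)) *
            (∏ i : Fin M, ∏ j ∈ Finset.Ioi i, (x i - x j))) * (((-1:ℝ)^E) * ((-1:ℝ)^E)) := by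
      rw [hdetfact, hvand]; ring
    rw [hcalc, hneg1, mul_one]
    have h1 : 0 < ∏ k : Fin M, Real.sin (θ k) := Finset.prod_pos fun k _ => hsinpos k
    have h2 : 0 < ∏ ℓ : Fin M, (2:ℝ) ^ (ℓ:ℕ) := Finset.prod_pos fun ℓ _ => by positivity
    positivity
  have habs : ((-1:ℝ)^E * Matrix.det A)^2 = ((n:ℝ)/2)^M := by
    rw [mul_pow, hsq, show ((-1:ℝ)^E)^2 = 1 by rw [sq]; exact hneg1, one_mul]
  have hfinal : (-1:ℝ)^E * Matrix.det A = Real.sqrt (((n:ℝ)/2)^M) := by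
    rw [← habs, Real.sqrt_sq hsign.le]
  refine ⟨E, ?_, ?_⟩
  · have hcard : ∀ i : Fin M, (Finset.Ioi i).card = M - 1 - (i:ℕ) := fun i => Fin.card_Ioi i
    have hE2 : E = ∑ i ∈ Finset.range M, (M - 1 - i) := by
      rw [hE, Finset.sum_congr rfl fun i _ => hcard i]
      exact Fin.sum_univ_eq_sum_range (fun i => M - 1 - i) M
    have hrefl : ∑ i ∈ Finset.range M, (M - 1 - i) = ∑ i ∈ Finset.range M, i :=
      Finset.sum_range_reflect (fun i => i) M
    have hid := Finset.sum_range_id_mul_two M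
    have hM2 : M - 1 = n - 2 := by omega
    rw [hE2, hrefl, mul_comm, hid, hM2, hM]
  · rw [← hfinal, ← mul_assoc, hneg1, one_mul]

theorem sine_matrix_det (N : ℕ) (hN : Even N) (h4 : 4 ≤ N) :
    Matrix.det (Matrix.of fun k ℓ : Fin (N / 2 - 1) =>
        (2 * (-I) ^ ((3 : ℂ) / 2) / (Real.sqrt N : ℂ)) *
          (Real.sin (2 * Real.pi * ((ℓ : ℕ) + 1) * ((k : ℕ) + 1) / N) : ℂ)) =
      (-I) ^ ((((N : ℂ) - 1) * ((N : ℂ) - 2)) / 4) := by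
  set n := N / 2 with hn
  have hNn : N = 2 * n := by obtain ⟨t, ht⟩ := hN; omega
  have hn2 : 2 ≤ n := by omega
  set M := n - 1 with hM
  have hNr : (N:ℝ) = 2 * n := by exact_mod_cast hNn
  have hnr0 : (0:ℝ) < n := by positivity
  obtain ⟨E, hE, hdet⟩ := detA_eq n hn2
  set c : ℂ := 2 * (-I) ^ ((3 : ℂ) / 2) / (Real.sqrt N : ℂ) with hc
  set A : Matrix (Fin M) (Fin M) ℝ :=
    Matrix.of (fun k ℓ : Fin M => Real.sin (Real.pi * ((ℓ:ℕ) + 1) * ((k:ℕ) + 1) / n)) with hA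
  -- rewrite the matrix
  have hO : (Matrix.of fun k ℓ : Fin (N / 2 - 1) =>
      c * (Real.sin (2 * Real.pi * ((ℓ : ℕ) + 1) * ((k : ℕ) + 1) / N) : ℂ))
      = c • (Complex.ofRealHom.mapMatrix A) := by
    ext k ℓ
    simp only [Matrix.of_apply, Matrix.smul_apply, RingHom.mapMatrix_apply, Matrix.map_apply,
      hA, Matrix.of_apply, ofRealHom_eq_coe, smul_eq_mul]
    have hnne : ((n:ℝ)) ≠ 0 := hnr0.ne'
    have h2n : (2:ℝ) * n ≠ 0 := by positivity
    congr 2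
    rw [hNr]
    congr 1
    rw [div_eq_div_iff h2n hnne]
    ring
  rw [hO, Matrix.det_smul, ← RingHom.map_det, Fintype.card_fin, hdet]
  -- sqrt computations
  have hsqrtpow : Real.sqrt (((n:ℝ)/2) ^ M) = (Real.sqrt ((n:ℝ)/2)) ^ M := by
    rw [show (((n:ℝ)/2) ^ M) = ((Real.sqrt ((n:ℝ)/2)) ^ M)^2 by
      rw [← pow_mul, mul_comm M 2, pow_mul, Real.sq_sqrt (by positivity)]]
    exact Real.sqrt_sq (by positivity)
  have hfac : c * (Real.sqrt ((n:ℝ)/2) : ℂ) = Complex.exp (-(3 * Real.pi / 4) * I) := by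
    have hcpow : (-I) ^ ((3 : ℂ) / 2) = Complex.exp (-(3 * Real.pi / 4) * I) := by
      rw [Complex.cpow_def_of_ne_zero (neg_ne_zero.mpr I_ne_zero), Complex.log_neg_I]
      congr 1
      ring
    have hsqN : Real.sqrt N = 2 * Real.sqrt ((n:ℝ)/2) := by
      rw [show (N:ℝ) = (2 * Real.sqrt ((n:ℝ)/2))^2 by
        rw [mul_pow, Real.sq_sqrt (by positivity)]
        rw [hNr]; ring]
      exact Real.sqrt_sq (by positivity)
    have hspos : (0:ℝ) < Real.sqrt ((n:ℝ)/2) := Real.sqrt_pos.mpr (by positivity)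
    have hsne : ((Real.sqrt ((n:ℝ)/2) : ℝ) : ℂ) ≠ 0 := by exact_mod_cast hspos.ne'
    have h2c : ((Real.sqrt 2 : ℝ) : ℂ) ≠ 0 := by
      have : (0:ℝ) < Real.sqrt 2 := Real.sqrt_pos.mpr (by norm_num)
      exact_mod_cast this.ne'
    have hncc : ((Real.sqrt (n:ℝ) : ℝ) : ℂ) ≠ 0 := by
      have : (0:ℝ) < Real.sqrt (n:ℝ) := Real.sqrt_pos.mpr hnr0
      exact_mod_cast this.ne'
    rw [hc, hcpow, hsqN]
    push_cast
    field_simp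
  -- assemble
  have hneg1 : ((-1:ℝ) : ℂ) = Complex.exp (-(Real.pi * I)) := by
    rw [Complex.exp_neg, Complex.exp_pi_mul_I]
    norm_num
  calc c ^ M * ((((-1:ℝ)) ^ E * Real.sqrt (((n:ℝ)/2) ^ M) : ℝ) : ℂ)
      = (c * (Real.sqrt ((n:ℝ)/2) : ℂ)) ^ M * (((-1:ℝ)) : ℂ) ^ E := by
        rw [hsqrtpow]; push_cast; ring
    _ = Complex.exp (-(3 * Real.pi / 4) * I) ^ M * Complex.exp (-(Real.pi * I)) ^ E := by
        rw [hfac, hneg1]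
    _ = Complex.exp ((M:ℂ) * (-(3 * Real.pi / 4) * I) + (E:ℂ) * (-(Real.pi * I))) := by
        rw [← Complex.exp_nat_mul, ← Complex.exp_nat_mul, ← Complex.exp_add]
    _ = (-I) ^ ((((N : ℂ) - 1) * ((N : ℂ) - 2)) / 4) := by
        rw [Complex.cpow_def_of_ne_zero (neg_ne_zero.mpr I_ne_zero), Complex.log_neg_I]
        congr 1
        have hMc : ((M:ℕ):ℂ) = (n:ℂ) - 1 := by
          rw [hM]; push_cast [Nat.cast_sub (by omega : 1 ≤ n)]; ring
        have hEc : 2 * (E:ℂ) = ((n:ℂ) - 1) * ((n:ℂ) - 2) := by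
          have : ((2 * E : ℕ) : ℂ) = (((n-1) * (n-2) : ℕ) : ℂ) := congrArg (Nat.cast (R := ℂ)) hE
          push_cast [Nat.cast_sub (by omega : 1 ≤ n), Nat.cast_sub (by omega : 2 ≤ n)] at this
          linear_combination this
        have hNc : (N:ℂ) = 2 * (n:ℂ) := by exact_mod_cast hNn
        rw [hMc, hNc]
        linear_combination (-(Real.pi:ℂ) * I / 2) * hEc
end

section
/- Let N be a positive even integer and r ∈ ℤ. Then θ̃_{3/2}(N, r; −1/τ) = (2/√N)(−iτ)^{3/2} ∑_{k=1}^{N/2−1} sin(2πkr/N) θ̃_{3/2}(N, k; τ), where θ̃_{3/2}(N,r;τ) := ∑_{n∈ℤ} (n + r/N) e^{πiNτ(n + r/N)²}. -/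
open Complex

/-- The shifted weight 3/2 theta function
`θ̃_{3/2}(N,r;τ) = ∑_{n∈ℤ} (n + r/N) q^{(N/2)(n + r/N)²}` (for `N` even). -/
noncomputable def thetaTilde (N : ℕ) (r : ℤ) (τ : ℂ) : ℂ :=
  ∑' n : ℤ, ((n : ℂ) + (r : ℂ) / (N : ℂ)) *
    Complex.exp ((Real.pi : ℂ) * I * N * τ * ((n : ℂ) + (r : ℂ) / (N : ℂ)) ^ 2)

lemma hasSum_thetaTilde' (N : ℕ) (h0 : 0 < N) (r : ℤ) {τ : ℂ} (hτ : 0 < τ.im) :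
    HasSum (fun n : ℤ => ((n : ℂ) + (r : ℂ) / (N : ℂ)) *
      Complex.exp ((Real.pi : ℂ) * I * N * τ * ((n : ℂ) + (r : ℂ) / (N : ℂ)) ^ 2))
      (HurwitzZeta.jacobiTheta₂'' ((r : ℂ) / (N : ℂ)) ((N : ℂ) * τ)) := by
  have hN : (N : ℂ) ≠ 0 := Nat.cast_ne_zero.mpr h0.ne'
  have him : 0 < (((N : ℂ)) * τ).im := by
    simp only [mul_im, natCast_re, natCast_im, zero_mul, add_zero]
    positivity
  have h1 := hasSum_jacobiTheta₂_term ((r : ℂ) * τ) him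
  have h2 := hasSum_jacobiTheta₂'_term ((r : ℂ) * τ) him
  have hz : (r : ℂ) / (N : ℂ) * ((N : ℂ) * τ) = (r : ℂ) * τ := by
    field_simp
  rw [HurwitzZeta.jacobiTheta₂'', hz]
  refine (((h2.div_const (2 * (Real.pi:ℂ) * I)).add (h1.mul_left ((r : ℂ) / (N : ℂ)))).mul_left
    (cexp ((Real.pi:ℂ) * I * ((r : ℂ) / (N : ℂ)) ^ 2 * ((N : ℂ) * τ)))).congr_fun (fun n => ?_)
  rw [jacobiTheta₂'_term, mul_assoc (2 * (Real.pi:ℂ) * I), mul_div_cancel_left₀ _ two_pi_I_ne_zero,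
    ← add_mul, jacobiTheta₂_term,
    show (Real.pi:ℂ) * I * (N:ℂ) * τ * ((n:ℂ) + (r:ℂ)/(N:ℂ))^2 =
      (Real.pi:ℂ) * I * ((r:ℂ)/(N:ℂ))^2 * ((N:ℂ) * τ) +
      (2 * (Real.pi:ℂ) * I * (n:ℂ) * ((r:ℂ) * τ) + (Real.pi:ℂ) * I * (n:ℂ)^2 * ((N:ℂ) * τ)) from by
        field_simp; ring,
    Complex.exp_add]
  ring

lemma thetaTilde_eq (N : ℕ) (h0 : 0 < N) (r : ℤ) {τ : ℂ} (hτ : 0 < τ.im) :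
    thetaTilde N r τ = HurwitzZeta.jacobiTheta₂'' ((r : ℂ) / (N : ℂ)) ((N : ℂ) * τ) :=
  (hasSum_thetaTilde' N h0 r hτ).tsum_eq

lemma hasSum_thetaTilde (N : ℕ) (h0 : 0 < N) (r : ℤ) {τ : ℂ} (hτ : 0 < τ.im) :
    HasSum (fun n : ℤ => ((n : ℂ) + (r : ℂ) / (N : ℂ)) *
      Complex.exp ((Real.pi : ℂ) * I * N * τ * ((n : ℂ) + (r : ℂ) / (N : ℂ)) ^ 2))
      (thetaTilde N r τ) := by
  rw [thetaTilde_eq N h0 r hτ]; exact hasSum_thetaTilde' N h0 r hτ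

lemma thetaTilde_neg (N : ℕ) (h0 : 0 < N) (k : ℤ) (τ : ℂ) :
    thetaTilde N ((N : ℤ) - k) τ = - thetaTilde N k τ := by
  have hN : (N : ℂ) ≠ 0 := Nat.cast_ne_zero.mpr h0.ne'
  rw [thetaTilde, thetaTilde, ← tsum_neg]
  rw [← ((Equiv.addRight (1 : ℤ)).trans (Equiv.neg ℤ)).tsum_eq
    (fun n : ℤ => ((n : ℂ) + (((N : ℤ) - k : ℤ) : ℂ) / (N : ℂ)) *
      Complex.exp ((Real.pi : ℂ) * I * N * τ * ((n : ℂ) + (((N : ℤ) - k : ℤ) : ℂ) / (N : ℂ)) ^ 2))]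
  refine tsum_congr fun n => ?_
  simp only [Equiv.trans_apply, Equiv.coe_addRight, Equiv.neg_apply]
  push_cast
  rw [show (-(n + 1) : ℂ) + ((N : ℂ) - (k : ℂ)) / (N : ℂ) = -((n : ℂ) + (k : ℂ) / (N : ℂ)) from by
    field_simp; ring]
  ring_nf

lemma thetaTilde_zero (N : ℕ) (τ : ℂ) : thetaTilde N 0 τ = 0 := by
  have h : thetaTilde N 0 τ = - thetaTilde N 0 τ := by
    rw [thetaTilde, ← tsum_neg]
    rw [← (Equiv.neg ℤ).tsum_eq (fun n : ℤ => ((n : ℂ) + ((0 : ℤ) : ℂ) / (N : ℂ)) *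
      Complex.exp ((Real.pi : ℂ) * I * N * τ * ((n : ℂ) + ((0 : ℤ) : ℂ) / (N : ℂ)) ^ 2))]
    refine tsum_congr fun n => ?_
    simp only [Equiv.neg_apply]
    push_cast
    ring_nf
  linear_combination h / 2

lemma jacobiTheta₂'_eq_sum (N : ℕ) (h0 : 0 < N) (r : ℤ) {τ : ℂ} (hτ : 0 < τ.im) :
    jacobiTheta₂' ((r : ℂ) / (N : ℂ)) (τ / (N : ℂ)) =
      2 * (Real.pi : ℂ) * I * N * ∑ k ∈ Finset.range N,
        Complex.exp (2 * (Real.pi : ℂ) * I * k * r / N) * thetaTilde N (k : ℤ) τ := by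
  have hN : (N : ℂ) ≠ 0 := Nat.cast_ne_zero.mpr h0.ne'
  have hNZ : (N : ℤ) ≠ 0 := Int.natCast_ne_zero.mpr h0.ne'
  have him : 0 < (τ / (N : ℂ)).im := by
    rw [div_im]
    simp only [natCast_re, natCast_im, zero_mul, mul_zero, zero_div, sub_zero, normSq_natCast]
    positivity
  set F : ℤ → ℂ := fun m => jacobiTheta₂'_term m ((r : ℂ) / (N : ℂ)) (τ / (N : ℂ)) with hF
  have hsum : ∀ k ∈ Finset.range N, HasSum
      (fun m : ℤ => if m % (N : ℤ) = (k : ℤ) then F m else 0)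
      (2 * (Real.pi : ℂ) * I * N *
        (Complex.exp (2 * (Real.pi : ℂ) * I * k * r / N) * thetaTilde N (k : ℤ) τ)) := by
    intro k hk
    have hkN : (k : ℤ) < (N : ℤ) := by exact_mod_cast Finset.mem_range.mp hk
    have hk0 : (0 : ℤ) ≤ (k : ℤ) := Int.natCast_nonneg k
    have hinj : Function.Injective (fun n : ℤ => (N : ℤ) * n + k) := by
      intro a b hab
      simp only [add_left_inj] at hab
      exact mul_left_cancel₀ hNZ hab
    have hvan : ∀ m ∉ Set.range (fun n : ℤ => (N : ℤ) * n + k),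
        (if m % (N : ℤ) = (k : ℤ) then F m else 0) = 0 := by
      intro m hm
      rw [if_neg]
      intro hmod
      exact hm ⟨m / (N : ℤ), by simpa [← hmod] using Int.mul_ediv_add_emod m (N : ℤ)⟩
    rw [← Function.Injective.hasSum_iff hinj hvan]
    have H := (hasSum_thetaTilde N h0 (k : ℤ) hτ).mul_left
      (2 * (Real.pi : ℂ) * I * N * Complex.exp (2 * (Real.pi : ℂ) * I * k * r / N))
    rw [← mul_assoc (2 * (Real.pi : ℂ) * I * (N : ℂ))]
    refine H.congr_fun fun n => ?_
    have hmod : ((N : ℤ) * n + k) % (N : ℤ) = (k : ℤ) := by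
      rw [add_comm, Int.add_mul_emod_self_left, Int.emod_eq_of_lt hk0 hkN]
    simp only [Function.comp_apply, hmod, if_pos rfl, hF, jacobiTheta₂'_term, jacobiTheta₂_term]
    rw [show 2 * (Real.pi : ℂ) * I * (((N : ℤ) * n + k : ℤ) : ℂ) * ((r : ℂ) / (N : ℂ)) +
        (Real.pi : ℂ) * I * (((N : ℤ) * n + k : ℤ) : ℂ) ^ 2 * (τ / (N : ℂ)) =
        ((n * r : ℤ) : ℂ) * (2 * (Real.pi : ℂ) * I) +
        (2 * (Real.pi : ℂ) * I * (k : ℂ) * (r : ℂ) / (N : ℂ) +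
          (Real.pi : ℂ) * I * (N : ℂ) * τ * ((n : ℂ) + (k : ℂ) / (N : ℂ)) ^ 2) from by
      push_cast
      field_simp
      ring, Complex.exp_add, Complex.exp_add, Complex.exp_int_mul_two_pi_mul_I, one_mul]
    push_cast
    field_simp
  have H2 : HasSum F (∑ k ∈ Finset.range N,
      2 * (Real.pi : ℂ) * I * N *
        (Complex.exp (2 * (Real.pi : ℂ) * I * k * r / N) * thetaTilde N (k : ℤ) τ)) := by
    refine (hasSum_sum hsum).congr_fun fun m => ?_
    have h1 : (0 : ℤ) ≤ m % (N : ℤ) := Int.emod_nonneg m hNZ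
    have h2 : m % (N : ℤ) < (N : ℤ) := Int.emod_lt_of_pos m (by exact_mod_cast h0)
    exact ((Finset.sum_eq_single (m % (N : ℤ)).toNat
      (fun b _ hb => if_neg fun hc => hb (by omega))
      (fun hj => absurd (Finset.mem_range.mpr (by omega)) hj)).trans (if_pos (by omega))).symm
  have H3 := hasSum_jacobiTheta₂'_term ((r : ℂ) / (N : ℂ)) him
  rw [H3.unique H2, Finset.mul_sum]

lemma thetaTilde_half (N M : ℕ) (h0 : 0 < N) (hNM : N = M + M) (τ : ℂ) :
    thetaTilde N (M : ℤ) τ = 0 := by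
  have h := thetaTilde_neg N h0 (M : ℤ) τ
  rw [show ((N : ℤ) - M) = (M : ℤ) by omega] at h
  linear_combination h / 2

lemma ofReal_mul_cpow' {c : ℝ} (hc : 0 < c) {z : ℂ} (hz : z ≠ 0) (w : ℂ) :
    ((c : ℂ) * z) ^ w = (c : ℂ) ^ w * z ^ w := by
  rw [cpow_def_of_ne_zero (mul_ne_zero (ofReal_ne_zero.mpr hc.ne') hz),
    cpow_def_of_ne_zero (ofReal_ne_zero.mpr hc.ne'), cpow_def_of_ne_zero hz,
    ← Complex.exp_add, Complex.log_ofReal_mul hc hz, add_mul, Complex.ofReal_log hc.le]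

lemma exp_I_sub_exp_neg_I (x : ℝ) :
    cexp ((x : ℂ) * I) - cexp (-(x : ℂ) * I) = 2 * I * (Real.sin x : ℂ) := by
  rw [show (-(x : ℂ) * I) = ((-x : ℂ)) * I by ring, Complex.exp_mul_I, Complex.exp_mul_I,
    Complex.cos_neg, Complex.sin_neg]
  push_cast
  ring

lemma sum_range_reflect_eq (N M : ℕ) (hNM : N = M + M) (hM : 0 < M) (g : ℕ → ℂ)
    (hg0 : g 0 = 0) (hgM : g M = 0) :
    ∑ k ∈ Finset.range N, g k = ∑ k ∈ Finset.Ico 1 M, (g k + g (N - k)) := by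
  rw [Finset.range_eq_Ico, ← Finset.sum_Ico_consecutive g (Nat.zero_le M) (by omega : M ≤ N),
    Finset.sum_eq_sum_Ico_succ_bot hM g, hg0, zero_add,
    Finset.sum_eq_sum_Ico_succ_bot (by omega : M < N) g, hgM, zero_add,
    Finset.sum_add_distrib, zero_add]
  refine congrArg₂ (· + ·) rfl ?_
  refine (Finset.sum_nbij' (fun k => N - k) (fun k => N - k) ?_ ?_ ?_ ?_ (fun a ha => rfl)).symm <;>
    · intro a ha
      simp only [Finset.mem_Ico] at ha ⊢
      omega

theorem thetaTilde_inversion (N : ℕ) (hN : Even N) (h0 : 0 < N) (r : ℤ) (τ : ℂ)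
    (hτ : 0 < τ.im) :
    thetaTilde N r (-1 / τ) =
      2 / (Real.sqrt N : ℂ) * (-I * τ) ^ ((3 : ℂ) / 2) *
        ∑ k ∈ Finset.Icc 1 (N / 2 - 1),
          (Real.sin (2 * Real.pi * k * r / N) : ℂ) * thetaTilde N (k : ℤ) τ := by

  obtain ⟨M, hNM⟩ := hN
  have hM : 0 < M := by omega
  have hτ0 : τ ≠ 0 := by intro h; rw [h] at hτ; simp at hτ
  have hNC : (N : ℂ) ≠ 0 := Nat.cast_ne_zero.mpr h0.ne'
  have hπ0 : (Real.pi : ℂ) ≠ 0 := ofReal_ne_zero.mpr Real.pi_ne_zero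
  have him : 0 < (-1 / τ).im := by
    rw [neg_div, one_div, neg_im, inv_im, neg_div, neg_neg]
    exact div_pos hτ (normSq_pos.mpr hτ0)
  have hbase : -I * (τ / (N : ℂ)) ≠ 0 :=
    mul_ne_zero (neg_ne_zero.mpr I_ne_zero) (div_ne_zero hτ0 hNC)
  have e1 : thetaTilde N r (-1 / τ) =
      HurwitzZeta.jacobiTheta₂'' ((r : ℂ) / (N : ℂ)) (-1 / (τ / (N : ℂ))) := by
    rw [thetaTilde_eq N h0 r him]
    congr 1
    field_simp
  have hA : ((-I * (τ / (N : ℂ))) ^ ((3 : ℂ) / 2)) ≠ 0 := by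
    intro h
    rw [cpow_eq_zero_iff] at h
    exact hbase h.1
  have hπ : (-2 * (Real.pi : ℂ)) ≠ 0 := by simp [Real.pi_ne_zero]
  have e3 : HurwitzZeta.jacobiTheta₂'' ((r : ℂ) / (N : ℂ)) (-1 / (τ / (N : ℂ))) =
      (-I * (τ / (N : ℂ))) ^ ((3 : ℂ) / 2) / (-2 * (Real.pi : ℂ)) *
        jacobiTheta₂' ((r : ℂ) / (N : ℂ)) (τ / (N : ℂ)) := by
    rw [HurwitzZeta.jacobiTheta₂'_functional_equation' ((r : ℂ) / (N : ℂ)) (τ / (N : ℂ))]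
    field_simp
    rw [mul_div_assoc, div_self (by rw [show -(τ * I / (N:ℂ)) = -I * (τ / N) by ring]; exact hA), mul_one]
  set g : ℕ → ℂ := fun k =>
    Complex.exp (2 * (Real.pi : ℂ) * I * k * r / N) * thetaTilde N (k : ℤ) τ with hg
  have hg0 : g 0 = 0 := by simp [hg, thetaTilde_zero]
  have hgM : g M = 0 := by simp [hg, thetaTilde_half N M h0 hNM τ]
  have e4 : jacobiTheta₂' ((r : ℂ) / (N : ℂ)) (τ / (N : ℂ)) =
      2 * (Real.pi : ℂ) * I * N * ∑ k ∈ Finset.range N, g k :=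
    jacobiTheta₂'_eq_sum N h0 r hτ
  have e5 : ∑ k ∈ Finset.range N, g k = ∑ k ∈ Finset.Ico 1 M, (g k + g (N - k)) :=
    sum_range_reflect_eq N M hNM hM g hg0 hgM
  have e6 : ∀ k ∈ Finset.Ico 1 M, g k + g (N - k) =
      2 * I * ((Real.sin (2 * Real.pi * k * r / N) : ℝ) : ℂ) * thetaTilde N (k : ℤ) τ := by
    intro k hk
    simp only [Finset.mem_Ico] at hk
    have hkN : k ≤ N := by omega
    have hcastZ : ((N - k : ℕ) : ℤ) = (N : ℤ) - (k : ℤ) := by omega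
    have hth : thetaTilde N ((N - k : ℕ) : ℤ) τ = - thetaTilde N (k : ℤ) τ := by
      rw [hcastZ, thetaTilde_neg N h0 k τ]
    have hexp1 : 2 * (Real.pi : ℂ) * I * (k : ℂ) * (r : ℂ) / (N : ℂ) =
        ((2 * Real.pi * k * r / N : ℝ) : ℂ) * I := by push_cast; ring
    have hexp2 : 2 * (Real.pi : ℂ) * I * ((N - k : ℕ) : ℂ) * (r : ℂ) / (N : ℂ) =
        ((r : ℤ) : ℂ) * (2 * (Real.pi : ℂ) * I) + -((2 * Real.pi * k * r / N : ℝ) : ℂ) * I := by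
      rw [show ((N - k : ℕ) : ℂ) = (N : ℂ) - (k : ℂ) by push_cast [hkN]; ring]
      push_cast
      field_simp
      ring
    simp only [hg]
    rw [hth, hexp1, hexp2, Complex.exp_add, Complex.exp_int_mul_two_pi_mul_I, one_mul]
    linear_combination (thetaTilde N (k : ℤ) τ) * exp_I_sub_exp_neg_I (2 * Real.pi * k * r / N)
  have e7 : ∑ k ∈ Finset.Ico 1 M, (g k + g (N - k)) =
      2 * I * ∑ k ∈ Finset.Icc 1 (N / 2 - 1),
        ((Real.sin (2 * Real.pi * k * r / N) : ℝ) : ℂ) * thetaTilde N (k : ℤ) τ := by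
    have hIcc : Finset.Icc 1 (N / 2 - 1) = Finset.Ico 1 M := by
      rw [show N / 2 - 1 = M - 1 by omega, ← Finset.Ico_add_one_right_eq_Icc]
      congr 1
      omega
    rw [Finset.mul_sum, hIcc]
    exact Finset.sum_congr rfl fun k hk => by rw [e6 k hk]; ring
  have hz : (-I * τ) ≠ 0 := mul_ne_zero (neg_ne_zero.mpr I_ne_zero) hτ0
  have hIr : (((N : ℝ)⁻¹) ^ ((3 : ℝ) / 2) : ℝ) * (2 * N) = 2 / Real.sqrt N := by
    have hNR : (0 : ℝ) < N := by exact_mod_cast h0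
    rw [Real.inv_rpow hNR.le, show ((3 : ℝ) / 2) = 1 + 1 / 2 by norm_num,
      Real.rpow_add hNR, Real.rpow_one, ← Real.sqrt_eq_rpow]
    have hs : Real.sqrt N ≠ 0 := by positivity
    field_simp
  have hcoef : (-I * (τ / (N : ℂ))) ^ ((3 : ℂ) / 2) / (-2 * (Real.pi : ℂ)) *
      (2 * (Real.pi : ℂ) * I * (N : ℂ)) * (2 * I)
      = 2 / (Real.sqrt N : ℂ) * (-I * τ) ^ ((3 : ℂ) / 2) := by
    have hsplit : -I * (τ / (N : ℂ)) = (((N : ℝ)⁻¹ : ℝ) : ℂ) * (-I * τ) := by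
      push_cast
      field_simp
    have hNRinv : (0 : ℝ) < (N : ℝ)⁻¹ := by positivity
    have hstep : ∀ Y : ℂ, Y / (-2 * (Real.pi : ℂ)) * (2 * (Real.pi : ℂ) * I * (N : ℂ)) * (2 * I)
        = 2 * (N : ℂ) * Y := by
      intro Y
      field_simp
      linear_combination (-Y) * Complex.I_sq
    rw [hsplit, ofReal_mul_cpow' hNRinv hz, show ((3 : ℂ) / 2) = (((3 : ℝ) / 2 : ℝ) : ℂ) by
      norm_num, ← Complex.ofReal_cpow hNRinv.le,
      show (2 : ℂ) / (Real.sqrt N : ℂ) =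
        ((((N : ℝ)⁻¹) ^ ((3 : ℝ) / 2) * (2 * N) : ℝ) : ℂ) by rw [hIr]; push_cast; ring,
      hstep]
    push_cast
    ring
  rw [e1, e3, e4, e5, e7, ← hcoef]
  ring
end

section
/- Let χ: ℤ → ℂ be periodic with mean value zero. Then as t → 0⁺, ∑_{n≥1} n χ(n) e^{−n²t} has the asymptotic expansion ∑_{n≥0} (−1)^n L(−2n−1, χ) t^n/n!, i.e., for every M, ∑_{n≥1} n χ(n) e^{−n²t} − ∑_{n=0}^{M} (−1)^n L(−2n−1,χ) t^n/n! = O(t^{M+1}). -/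
open Complex Asymptotics Filter Finset

namespace PTA

noncomputable section


/-- forward difference on ℕ-indexed functions -/
def Dn (h : ℕ → ℂ) : ℕ → ℂ := fun n => h n - h (n + 1)

/-- forward difference on ℝ-indexed functions -/
def Dr (φ : ℝ → ℂ) : ℝ → ℂ := fun x => φ x - φ (x + 1)

def psum (d : ℕ → ℂ) : ℕ → ℂ := fun n => ∑ k ∈ range (n + 1), d k

def mval (M : ℕ) (d : ℕ → ℂ) : ℂ := (∑ n ∈ range M, psum d n) / M

def stepc (M : ℕ) (d : ℕ → ℂ) : ℕ → ℂ := fun n => psum d n - mval M d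

structure Good (M : ℕ) (d : ℕ → ℂ) : Prop where
  per : ∀ n, d (n + M) = d n
  mean : ∑ n ∈ range M, d n = 0

lemma Good.window {M : ℕ} {d : ℕ → ℂ} (hd : Good M d) :
    ∀ a, ∑ k ∈ range M, d (a + k) = 0 := by
  intro a
  induction a with
  | zero => simpa using hd.mean
  | succ a ih =>
    have h1 : ∑ k ∈ range (M + 1), d (a + k) = ∑ k ∈ range M, d (a + 1 + k) + d (a + 0) := by
      rw [Finset.sum_range_succ' (fun k => d (a + k)) M]
      congr 1
      apply Finset.sum_congr rfl; intro k _; congr 1; omega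
    have h2 : ∑ k ∈ range (M + 1), d (a + k) = ∑ k ∈ range M, d (a + k) + d (a + M) := by
      rw [Finset.sum_range_succ]
    have h3 : d (a + M) = d a := hd.per a
    have h4 := h1.symm.trans h2
    simp only [add_zero, h3] at h4
    have h5 : ∑ k ∈ range M, d (a + 1 + k) = ∑ k ∈ range M, d (a + k) := by
      linear_combination h4
    rw [h5, ih]

lemma Good.psum_per {M : ℕ} {d : ℕ → ℂ} (hd : Good M d) :
    ∀ n, psum d (n + M) = psum d n := by
  intro n
  have h : psum d (n + M) = psum d n + ∑ k ∈ range M, d (n + 1 + k) := by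
    unfold psum
    rw [show n + M + 1 = (n + 1) + M by omega, Finset.sum_range_add]
  rw [h, hd.window (n + 1), add_zero]

lemma Good.step {M : ℕ} {d : ℕ → ℂ} (hM : 0 < M) (hd : Good M d) :
    Good M (stepc M d) := by
  constructor
  · intro n; unfold stepc; rw [hd.psum_per n]
  · unfold stepc mval
    rw [Finset.sum_sub_distrib, Finset.sum_const, Finset.card_range]
    rw [nsmul_eq_mul, mul_div_cancel₀, sub_self]
    exact_mod_cast Nat.cast_ne_zero.mpr hM.ne'

lemma Good.iter {M : ℕ} {d : ℕ → ℂ} (hM : 0 < M) (hd : Good M d) :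
    ∀ j, Good M ((stepc M)^[j] d) := by
  intro j
  induction j with
  | zero => simpa using hd
  | succ j ih => rw [Function.iterate_succ_apply']; exact ih.step hM

lemma bound_of_periodic {M : ℕ} {d : ℕ → ℂ} (hM : 0 < M) (hper : ∀ n, d (n + M) = d n) :
    ∃ C : ℝ, 0 ≤ C ∧ ∀ n, ‖d n‖ ≤ C := by
  refine ⟨∑ k ∈ range M, ‖d k‖, Finset.sum_nonneg fun _ _ => norm_nonneg _, fun n => ?_⟩
  have hq : ∀ q r, d (r + M * q) = d r := by
    intro q
    induction q with
    | zero => simp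
    | succ q ih =>
      intro r
      rw [show r + M * (q + 1) = (r + M * q) + M by ring, hper, ih]
  have hmod : d n = d (n % M) := by
    conv_lhs => rw [← Nat.mod_add_div n M, hq]
  rw [hmod]
  exact Finset.single_le_sum (fun i _ => norm_nonneg (d i))
    (Finset.mem_range.mpr (Nat.mod_lt _ hM))

lemma summable_norm_shift {h : ℕ → ℂ} (hh : Summable fun n => ‖h n‖) (k : ℕ) :
    Summable fun n => ‖h (n + k)‖ :=
  (summable_nat_add_iff k).mpr hh

lemma summable_norm_Dn {h : ℕ → ℂ} (hh : Summable fun n => ‖h n‖) :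
    Summable fun n => ‖Dn h n‖ := by
  refine Summable.of_nonneg_of_le (fun n => norm_nonneg _) (fun n => norm_sub_le _ _)
    (hh.add (summable_norm_shift hh 1))

lemma summable_norm_DnIter {h : ℕ → ℂ} (hh : Summable fun n => ‖h n‖) (j : ℕ) :
    Summable fun n => ‖Dn^[j] h n‖ := by
  induction j generalizing h with
  | zero => simpa using hh
  | succ j ih => rw [Function.iterate_succ_apply]; exact ih (summable_norm_Dn hh)

lemma tsum_Dn {h : ℕ → ℂ} (hh : Summable fun n => ‖h n‖) : ∑' n, Dn h n = h 0 := by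
  have hs : Summable (Dn h) := (summable_norm_Dn hh).of_norm
  have h1 : Tendsto (fun N => ∑ n ∈ range N, Dn h n) atTop (nhds (∑' n, Dn h n)) :=
    hs.hasSum.tendsto_sum_nat
  have h2 : ∀ N, ∑ n ∈ range N, Dn h n = h 0 - h N := fun N =>
    Finset.sum_range_sub' h N
  have h3 : Tendsto (fun N => h 0 - h N) atTop (nhds (h 0 - 0)) :=
    tendsto_const_nhds.sub hh.of_norm.tendsto_atTop_zero
  simp only [sub_zero] at h3
  rw [funext h2] at h1
  exact tendsto_nhds_unique h1 h3

lemma abel_step {M : ℕ} {d : ℕ → ℂ} {h : ℕ → ℂ} (hM : 0 < M) (hd : Good M d)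
    (hh : Summable fun n => ‖h n‖) :
    ∑' n, d n * h n = mval M d * h 0 + ∑' n, stepc M d n * Dn h n := by
  obtain ⟨Cd, hCd0, hCd⟩ := bound_of_periodic hM hd.per
  obtain ⟨Cp, hCp0, hCp⟩ := bound_of_periodic hM hd.psum_per
  -- summabilities
  have Sdh : Summable fun n => d n * h n := by
    apply Summable.of_norm
    refine Summable.of_nonneg_of_le (fun n => norm_nonneg _) (fun n => ?_) (hh.mul_left Cd)
    rw [norm_mul]; exact mul_le_mul_of_nonneg_right (hCd n) (norm_nonneg _)
  have SpD : Summable fun n => psum d n * Dn h n := by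
    apply Summable.of_norm
    refine Summable.of_nonneg_of_le (fun n => norm_nonneg _) (fun n => ?_)
      ((summable_norm_Dn hh).mul_left Cp)
    rw [norm_mul]; exact mul_le_mul_of_nonneg_right (hCp n) (norm_nonneg _)
  -- telescoping part
  set g : ℕ → ℂ := fun n => (∑ k ∈ range n, d k) * h n with hg
  have key : ∀ n, d n * h n = psum d n * Dn h n + (g (n + 1) - g n) := by
    intro n
    simp only [hg, Dn, psum, Finset.sum_range_succ]
    ring
  have Stel : Summable fun n => g (n + 1) - g n := by
    have := Sdh.sub SpD
    apply this.congr
    intro n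
    have := key n
    linear_combination this
  have htel : ∑' n, (g (n + 1) - g n) = 0 := by
    have h1 : Tendsto (fun N => ∑ n ∈ range N, (g (n + 1) - g n)) atTop
        (nhds (∑' n, (g (n + 1) - g n))) := Stel.hasSum.tendsto_sum_nat
    have h2 : ∀ N, ∑ n ∈ range N, (g (n + 1) - g n) = g N - g 0 := fun N =>
      Finset.sum_range_sub g N
    have hg0 : g 0 = 0 := by simp [hg]
    have h3 : Tendsto g atTop (nhds 0) := by
      rw [tendsto_zero_iff_norm_tendsto_zero]
      have hlim : Tendsto (fun k => Cp * ‖h k‖) atTop (nhds 0) := by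
        simpa using Tendsto.const_mul Cp (tendsto_zero_iff_norm_tendsto_zero.mp
          hh.of_norm.tendsto_atTop_zero)
      refine squeeze_zero (fun n => norm_nonneg _) (fun n => ?_) hlim
      rw [hg, norm_mul]
      have : ‖∑ k ∈ range n, d k‖ ≤ Cp := by
        rcases n with _ | m
        · simpa using hCp0
        · exact hCp m
      exact mul_le_mul_of_nonneg_right this (norm_nonneg _)
    rw [funext h2] at h1
    have h4 : Tendsto (fun N => g N - g 0) atTop (nhds 0) := by
      rw [hg0]; simpa using h3
    exact tendsto_nhds_unique h1 h4
  have split : ∑' n, d n * h n = ∑' n, psum d n * Dn h n := by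
    calc ∑' n, d n * h n = ∑' n, (psum d n * Dn h n + (g (n + 1) - g n)) := tsum_congr key
    _ = ∑' n, psum d n * Dn h n + ∑' n, (g (n + 1) - g n) := SpD.tsum_add Stel
    _ = ∑' n, psum d n * Dn h n := by rw [htel, add_zero]
  -- split psum into stepc + mval
  have SsD : Summable fun n => stepc M d n * Dn h n := by
    obtain ⟨Cs, _, hCs⟩ := bound_of_periodic hM (hd.step hM).per
    apply Summable.of_norm
    refine Summable.of_nonneg_of_le (fun n => norm_nonneg _) (fun n => ?_)
      ((summable_norm_Dn hh).mul_left Cs)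
    rw [norm_mul]; exact mul_le_mul_of_nonneg_right (hCs n) (norm_nonneg _)
  have SD : Summable (Dn h) := (summable_norm_Dn hh).of_norm
  rw [split]
  calc ∑' n, psum d n * Dn h n = ∑' n, (stepc M d n * Dn h n + mval M d * Dn h n) := by
        apply tsum_congr; intro n
        have : psum d n = stepc M d n + mval M d := by unfold stepc; ring
        rw [this]; ring
  _ = ∑' n, stepc M d n * Dn h n + ∑' n, mval M d * Dn h n :=
      SsD.tsum_add (SD.mul_left _)
  _ = mval M d * h 0 + ∑' n, stepc M d n * Dn h n := by
      rw [tsum_mul_left, tsum_Dn hh]; ring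

lemma abel_iter {M : ℕ} {d : ℕ → ℂ} {h : ℕ → ℂ} (hM : 0 < M) (hd : Good M d)
    (hh : Summable fun n => ‖h n‖) (K : ℕ) :
    ∑' n, d n * h n =
      (∑ j ∈ range K, mval M ((stepc M)^[j] d) * (Dn^[j] h) 0) +
        ∑' n, ((stepc M)^[K] d) n * (Dn^[K] h) n := by
  induction K with
  | zero => simp
  | succ K ih =>
    rw [ih, Finset.sum_range_succ]
    have h1 : ∑' n, ((stepc M)^[K] d) n * (Dn^[K] h) n =
        mval M ((stepc M)^[K] d) * (Dn^[K] h) 0 +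
          ∑' n, stepc M ((stepc M)^[K] d) n * Dn (Dn^[K] h) n :=
      abel_step hM (hd.iter hM K) (summable_norm_DnIter hh K)
    rw [h1, Function.iterate_succ_apply', Function.iterate_succ_apply']
    ring




/-- bridge between ℕ and ℝ finite differences -/
lemma Dn_eq_Dr (φ : ℝ → ℂ) (K : ℕ) :
    ∀ n : ℕ, Dn^[K] (fun m : ℕ => φ (m : ℝ)) n = Dr^[K] φ (n : ℝ) := by
  induction K generalizing φ with
  | zero => intro n; rfl
  | succ K ih =>
    intro n
    rw [Function.iterate_succ_apply, Function.iterate_succ_apply]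
    have : Dn (fun m : ℕ => φ (m : ℝ)) = fun m : ℕ => Dr φ (m : ℝ) := by
      funext m; simp only [Dn, Dr]; push_cast; ring_nf
    rw [this]; exact ih (Dr φ) n

/-- Mean-value bound for iterated finite differences. -/
lemma dr_bound : ∀ (K : ℕ) (ψ : ℕ → ℝ → ℂ) (β : ℝ → ℝ),
    (∀ k < K, ∀ x : ℝ, 0 ≤ x → HasDerivAt (ψ k) (ψ (k + 1) x) x) →
    (∀ ⦃a b : ℝ⦄, 0 ≤ a → a ≤ b → β b ≤ β a) →
    (∀ y : ℝ, 0 ≤ y → ‖ψ K y‖ ≤ β y) →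
    ∀ x : ℝ, 0 ≤ x → ‖Dr^[K] (ψ 0) x‖ ≤ β x := by
  intro K
  induction K with
  | zero => intro ψ β _ _ hbound x hx; simpa using hbound x hx
  | succ K ih =>
    intro ψ β hder hβ hbound x hx
    have key : Dr^[K + 1] (ψ 0) = Dr^[K] ((fun k => Dr (ψ k)) 0) := by
      rw [Function.iterate_succ_apply]
    rw [key]
    refine ih (fun k => Dr (ψ k)) β ?_ hβ ?_ x hx
    · intro k hk y hy
      have h1 : HasDerivAt (ψ k) (ψ (k + 1) y) y := hder k (by omega) y hy
      have h2 : HasDerivAt (fun z => ψ k (z + 1)) (ψ (k + 1) (y + 1)) y := by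
        have := (hder k (by omega) (y + 1) (by linarith)).scomp y
          ((hasDerivAt_id y).add_const 1)
        rw [one_smul] at this; exact this
      exact h1.sub h2
    · intro y hy
      have hmvt : ‖ψ K (y + 1) - ψ K y‖ ≤ β y * ‖(y + 1) - y‖ := by
        apply Convex.norm_image_sub_le_of_norm_hasDerivWithin_le
          (f := ψ K) (f' := ψ (K + 1)) (s := Set.Icc y (y + 1)) ?_ ?_
          (convex_Icc y (y + 1)) (Set.left_mem_Icc.mpr (by linarith))
          (Set.right_mem_Icc.mpr (by linarith))
        · intro z hz
          exact (hder K (by omega) z (le_trans hy hz.1)).hasDerivWithinAt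
        · intro z hz
          exact le_trans (hbound z (le_trans hy hz.1)) (hβ hy hz.1)
      simp only [add_sub_cancel_left, norm_one, mul_one] at hmvt
      calc ‖Dr (ψ K) y‖ = ‖ψ K (y + 1) - ψ K y‖ := by rw [Dr]; rw [norm_sub_rev]
      _ ≤ β y := hmvt

/-- linearity of iterated difference over finite sums with coefficients -/
lemma DnIter_sum {ι : Type*} (F : Finset ι) (a : ι → ℂ) (g : ι → ℕ → ℂ) (j : ℕ) :
    ∀ n, Dn^[j] (fun m => ∑ i ∈ F, a i * g i m) n = ∑ i ∈ F, a i * Dn^[j] (g i) n := by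
  induction j generalizing g with
  | zero => intro n; rfl
  | succ j ih =>
    intro n
    rw [Function.iterate_succ_apply]
    have : Dn (fun m => ∑ i ∈ F, a i * g i m) = fun m => ∑ i ∈ F, a i * Dn (g i) m := by
      funext m
      simp only [Dn, ← Finset.sum_sub_distrib, mul_sub]
    rw [this]
    have := ih (fun i => Dn (g i)) n
    simpa [Function.iterate_succ_apply] using this

lemma DnIter_sub (f g : ℕ → ℂ) (j : ℕ) :
    ∀ n, Dn^[j] (fun m => f m - g m) n = Dn^[j] f n - Dn^[j] g n := by
  induction j generalizing f g with
  | zero => intro n; rfl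
  | succ j ih =>
    intro n
    rw [Function.iterate_succ_apply, Function.iterate_succ_apply,
      Function.iterate_succ_apply]
    have : Dn (fun m => f m - g m) = fun m => Dn f m - Dn g m := by
      funext m; simp only [Dn]; ring
    rw [this]
    exact ih (Dn f) (Dn g) n

/-- crude norm bound for iterated differences -/
lemma DnIter_norm_le (j : ℕ) : ∀ (h : ℕ → ℂ) (n : ℕ),
    ‖Dn^[j] h n‖ ≤ ∑ i ∈ range (j + 1), (2 : ℝ) ^ j * ‖h (n + i)‖ := by
  induction j with
  | zero => intro h n; simp
  | succ j ih =>
    intro h n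
    rw [Function.iterate_succ_apply]
    refine le_trans (ih (Dn h) n) ?_
    have step : ∀ i, ‖Dn h (n + i)‖ ≤ ‖h (n + i)‖ + ‖h (n + (i + 1))‖ := by
      intro i
      simp only [Dn]
      have : n + i + 1 = n + (i + 1) := by omega
      rw [this]
      exact norm_sub_le _ _
    calc ∑ i ∈ range (j + 1), (2:ℝ) ^ j * ‖Dn h (n + i)‖
        ≤ ∑ i ∈ range (j + 1), (2:ℝ) ^ j * (‖h (n + i)‖ + ‖h (n + (i + 1))‖) := by
          apply Finset.sum_le_sum; intro i _
          exact mul_le_mul_of_nonneg_left (step i) (by positivity)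
      _ = ∑ i ∈ range (j + 1), (2:ℝ) ^ j * ‖h (n + i)‖
            + ∑ i ∈ range (j + 1), (2:ℝ) ^ j * ‖h (n + (i + 1))‖ := by
          rw [← Finset.sum_add_distrib]; apply Finset.sum_congr rfl; intros; ring
      _ ≤ ∑ i ∈ range (j + 2), (2:ℝ) ^ j * ‖h (n + i)‖
            + ∑ i ∈ range (j + 2), (2:ℝ) ^ j * ‖h (n + i)‖ := by
          apply add_le_add
          · apply Finset.sum_le_sum_of_subset_of_nonneg
              (Finset.range_subset_range.mpr (by omega))
            intros; positivity
          · rw [Finset.sum_range_succ' (fun i => (2:ℝ) ^ j * ‖h (n + i)‖) (j + 1)]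
            simp only [le_add_iff_nonneg_right]
            positivity
      _ = ∑ i ∈ range (j + 1 + 1), (2:ℝ) ^ (j + 1) * ‖h (n + i)‖ := by
          rw [← Finset.sum_add_distrib]; apply Finset.sum_congr rfl; intros; ring

/-- iterated difference annihilates polynomials of low degree -/
lemma DnIter_poly_zero : ∀ (K : ℕ) (q : Polynomial ℂ), q.natDegree < K →
    ∀ n, Dn^[K] (fun m : ℕ => q.eval (m : ℂ)) n = 0 := by
  have zero_case : ∀ (K : ℕ) (n : ℕ), Dn^[K] (fun _ : ℕ => (0 : ℂ)) n = 0 := by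
    intro K
    induction K with
    | zero => intro n; rfl
    | succ K ih =>
      intro n
      rw [Function.iterate_succ_apply]
      have : Dn (fun _ : ℕ => (0 : ℂ)) = fun _ : ℕ => (0 : ℂ) := by
        funext m; simp [Dn]
      rw [this]; exact ih n
  intro K
  induction K with
  | zero => intro q hq; omega
  | succ K ih =>
    intro q hq n
    rw [Function.iterate_succ_apply]
    set q₁ := q - q.comp (Polynomial.X + 1) with hq₁
    have hDn : Dn (fun m : ℕ => q.eval (m : ℂ)) = fun m : ℕ => q₁.eval (m : ℂ) := by
      funext m
      simp only [Dn, hq₁, Polynomial.eval_sub, Polynomial.eval_comp, Polynomial.eval_add,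
        Polynomial.eval_X, Polynomial.eval_one]
      push_cast; ring
    rw [hDn]
    by_cases hzero : q₁ = 0
    · rw [hzero]; simpa using zero_case K n
    -- q is not constant (else q₁ = 0)
    by_cases hdeg : q.natDegree = 0
    · obtain ⟨a, rfl⟩ := Polynomial.natDegree_eq_zero.mp hdeg
      exfalso; apply hzero
      simp [hq₁]
    · -- degree drop
      have hX1 : (Polynomial.X + 1 : Polynomial ℂ) = Polynomial.X + Polynomial.C 1 := by
        simp
      have hq0 : q ≠ 0 := fun h => hdeg (by simp [h])
      have hcompdeg : (q.comp (Polynomial.X + 1)).natDegree = q.natDegree := by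
        rw [Polynomial.natDegree_comp, hX1, Polynomial.natDegree_X_add_C, mul_one]
      have hlc : (q.comp (Polynomial.X + 1)).leadingCoeff = q.leadingCoeff := by
        rw [hX1, Polynomial.leadingCoeff_comp (by rw [Polynomial.natDegree_X_add_C]; omega)]
        rw [(Polynomial.monic_X_add_C (1 : ℂ)).leadingCoeff, one_pow, mul_one]
      have hcomp0 : q.comp (Polynomial.X + 1) ≠ 0 := by
        intro h
        apply hq0
        apply Polynomial.leadingCoeff_eq_zero.mp
        rw [← hlc, h, Polynomial.leadingCoeff_zero]
      have hdegeq : q.degree = (q.comp (Polynomial.X + 1)).degree := by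
        rw [Polynomial.degree_eq_natDegree hq0, Polynomial.degree_eq_natDegree hcomp0,
          hcompdeg]
      have hlt : q₁.degree < q.degree :=
        Polynomial.degree_sub_lt hdegeq hq0 hlc.symm
      have hnatlt : q₁.natDegree < q.natDegree :=
        Polynomial.natDegree_lt_natDegree hzero hlt
      exact ih q₁ (by omega) n

/-- exponential Taylor tail bound -/
lemma exp_tail (z : ℂ) (M : ℕ) :
    ‖Complex.exp z - ∑ k ∈ range (M + 1), z ^ k / (k.factorial : ℂ)‖ ≤
      ‖z‖ ^ (M + 1) * Real.exp ‖z‖ := by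
  have hsum : Summable fun k : ℕ => z ^ k / (k.factorial : ℂ) := by
    have := NormedSpace.expSeries_div_summable z
    exact this
  have hexp : Complex.exp z = ∑' k : ℕ, z ^ k / (k.factorial : ℂ) := by
    rw [Complex.exp_eq_exp_ℂ, NormedSpace.exp_eq_tsum_div]
  have hsplit := hsum.sum_add_tsum_nat_add (M + 1)
  have hdiff : Complex.exp z - ∑ k ∈ range (M + 1), z ^ k / (k.factorial : ℂ) =
      ∑' k : ℕ, z ^ (k + (M + 1)) / ((k + (M + 1)).factorial : ℂ) := by
    rw [hexp, ← hsplit]; ring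
  rw [hdiff]
  have hfac : ∀ k : ℕ, (k.factorial : ℝ) ≤ ((k + (M + 1)).factorial : ℝ) := fun k => by
    exact_mod_cast Nat.factorial_le (by omega)
  have hterm : ∀ k : ℕ, ‖z ^ (k + (M + 1)) / (((k + (M + 1)).factorial : ℕ) : ℂ)‖ ≤
      ‖z‖ ^ (M + 1) * (‖z‖ ^ k / (k.factorial : ℝ)) := by
    intro k
    rw [norm_div, norm_pow]
    have h1 : ‖(((k + (M + 1)).factorial : ℕ) : ℂ)‖ = ((k + (M + 1)).factorial : ℝ) := by simp
    rw [h1]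
    have h2 : ‖z‖ ^ (k + (M + 1)) / ((k + (M + 1)).factorial : ℝ) ≤
        ‖z‖ ^ (k + (M + 1)) / (k.factorial : ℝ) := by
      apply div_le_div_of_nonneg_left (by positivity) (by positivity) (hfac k)
    refine h2.trans (le_of_eq ?_)
    rw [pow_add]
    ring
  have hsumnorm : Summable fun k : ℕ => ‖z‖ ^ (M + 1) * (‖z‖ ^ k / (k.factorial : ℝ)) :=
    Summable.mul_left _ (Real.summable_pow_div_factorial ‖z‖)
  have hsummand : Summable fun k : ℕ =>
      ‖z ^ (k + (M + 1)) / (((k + (M + 1)).factorial : ℕ) : ℂ)‖ :=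
    Summable.of_nonneg_of_le (fun k => norm_nonneg _) hterm hsumnorm
  calc ‖∑' k : ℕ, z ^ (k + (M + 1)) / (((k + (M + 1)).factorial : ℕ) : ℂ)‖
      ≤ ∑' k : ℕ, ‖z ^ (k + (M + 1)) / (((k + (M + 1)).factorial : ℕ) : ℂ)‖ :=
        norm_tsum_le_tsum_norm hsummand
    _ ≤ ∑' k : ℕ, ‖z‖ ^ (M + 1) * (‖z‖ ^ k / (k.factorial : ℝ)) :=
        Summable.tsum_le_tsum hterm hsummand hsumnorm
    _ = ‖z‖ ^ (M + 1) * Real.exp ‖z‖ := by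
        rw [tsum_mul_left]
        congr 1
        rw [Real.exp_eq_exp_ℝ, NormedSpace.exp_eq_tsum_div]



/-- Hermite-type polynomials: derivatives of u * exp(-u²) -/
def Pg : ℕ → Polynomial ℂ
  | 0 => Polynomial.X
  | (k + 1) => (Pg k).derivative - Polynomial.C 2 * Polynomial.X * Pg k

def Gg (k : ℕ) (u : ℝ) : ℂ := (Pg k).eval (u : ℂ) * Complex.exp (-(u : ℂ) ^ 2)

lemma hasDerivAt_Gg (k : ℕ) (u : ℝ) : HasDerivAt (Gg k) (Gg (k + 1) u) u := by
  have hC : HasDerivAt (fun z : ℂ => (Pg k).eval z * Complex.exp (-z ^ 2))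
      ((Pg k).derivative.eval (u : ℂ) * Complex.exp (-(u : ℂ) ^ 2) +
        (Pg k).eval (u : ℂ) * (Complex.exp (-(u : ℂ) ^ 2) * (-(2 * (u : ℂ))))) (u : ℂ) := by
    have h1 : HasDerivAt (fun z : ℂ => (Pg k).eval z) ((Pg k).derivative.eval (u : ℂ)) (u : ℂ) :=
      Polynomial.hasDerivAt (Pg k) (u : ℂ)
    have h2 : HasDerivAt (fun z : ℂ => -z ^ 2) (-(2 * (u : ℂ))) (u : ℂ) := by
      have := (hasDerivAt_pow 2 (u : ℂ)).neg
      exact this.congr_deriv (by norm_num)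
    have h3 : HasDerivAt (fun z : ℂ => Complex.exp (-z ^ 2))
        (Complex.exp (-(u : ℂ) ^ 2) * (-(2 * (u : ℂ)))) (u : ℂ) := h2.cexp
    exact h1.mul h3
  have := hC.comp_ofReal
  refine this.congr_deriv ?_
  simp only [Gg, Pg, Polynomial.eval_sub, Polynomial.eval_mul, Polynomial.eval_C,
    Polynomial.eval_X]
  ring

/-- polynomial decay bound -/
lemma poly_exp_bound (p : Polynomial ℂ) : ∃ D : ℝ, 0 ≤ D ∧ ∀ u : ℝ, 0 ≤ u →
    ‖p.eval (u : ℂ)‖ * Real.exp (-u ^ 2) ≤ D * Real.exp (-u) := by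
  set n := p.natDegree
  refine ⟨(∑ i ∈ range (n + 1), ‖p.coeff i‖ * (i.factorial : ℝ)) * Real.exp 2,
    by positivity, fun u hu => ?_⟩
  have heval : ‖p.eval (u : ℂ)‖ ≤ ∑ i ∈ range (n + 1), ‖p.coeff i‖ * u ^ i := by
    rw [Polynomial.eval_eq_sum_range]
    refine le_trans (norm_sum_le _ _) ?_
    apply Finset.sum_le_sum
    intro i _
    rw [norm_mul, norm_pow]
    have : ‖(u : ℂ)‖ = u := by rw [Complex.norm_real, Real.norm_of_nonneg hu]
    rw [this]
  have hpow : ∀ i : ℕ, u ^ i ≤ (i.factorial : ℝ) * Real.exp u := by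
    intro i
    have h1 : u ^ i / (i.factorial : ℝ) ≤ Real.exp u := by
      refine le_trans ?_ (Real.sum_le_exp_of_nonneg hu (i + 1))
      refine Finset.single_le_sum (f := fun k => u ^ k / (k.factorial : ℝ))
        (fun k _ => by positivity) (Finset.mem_range.mpr (Nat.lt_succ_self i))
    calc u ^ i = u ^ i / (i.factorial : ℝ) * (i.factorial : ℝ) := by
          field_simp
    _ ≤ Real.exp u * (i.factorial : ℝ) :=
          mul_le_mul_of_nonneg_right h1 (by positivity)
    _ = (i.factorial : ℝ) * Real.exp u := by ring
  have hsum : ‖p.eval (u : ℂ)‖ ≤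
      (∑ i ∈ range (n + 1), ‖p.coeff i‖ * (i.factorial : ℝ)) * Real.exp u := by
    refine heval.trans ?_
    rw [Finset.sum_mul]
    apply Finset.sum_le_sum
    intro i _
    rw [mul_assoc]
    exact mul_le_mul_of_nonneg_left (hpow i) (norm_nonneg _)
  have hexp : Real.exp u * Real.exp (-u ^ 2) ≤ Real.exp 2 * Real.exp (-u) := by
    rw [← Real.exp_add, ← Real.exp_add]
    apply Real.exp_le_exp.mpr
    nlinarith [sq_nonneg (u - 1)]
  calc ‖p.eval (u : ℂ)‖ * Real.exp (-u ^ 2)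
      ≤ (∑ i ∈ range (n + 1), ‖p.coeff i‖ * (i.factorial : ℝ)) * Real.exp u *
        Real.exp (-u ^ 2) := by
        exact mul_le_mul_of_nonneg_right hsum (by positivity)
  _ = (∑ i ∈ range (n + 1), ‖p.coeff i‖ * (i.factorial : ℝ)) *
        (Real.exp u * Real.exp (-u ^ 2)) := by ring
  _ ≤ (∑ i ∈ range (n + 1), ‖p.coeff i‖ * (i.factorial : ℝ)) *
        (Real.exp 2 * Real.exp (-u)) := by
        exact mul_le_mul_of_nonneg_left hexp (by positivity)
  _ = (∑ i ∈ range (n + 1), ‖p.coeff i‖ * (i.factorial : ℝ)) * Real.exp 2 *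
        Real.exp (-u) := by ring



-- ==== copies of earlier defs (will be merged) ====
-- ==== end copies ====

/-- the Gaussian weight function, real-variable version -/
def φt (t : ℝ) (y : ℝ) : ℂ := ((y : ℂ) + 1) * Complex.exp (-(((y : ℂ) + 1) ^ 2 * (t : ℂ)))

/-- the Gaussian weight function, ℕ-indexed -/
def htf (t : ℝ) : ℕ → ℂ := fun n => φt t n

lemma gauss_Dn_bound (K : ℕ) : ∃ D : ℝ, 0 ≤ D ∧ ∀ t : ℝ, 0 < t → ∀ n : ℕ,
    ‖Dn^[K] (htf t) n‖ ≤
      D * (Real.sqrt t) ^ K / Real.sqrt t * Real.exp (-((n : ℝ) + 1) * Real.sqrt t) := by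
  obtain ⟨D, hD0, hD⟩ := poly_exp_bound (Pg K)
  refine ⟨D, hD0, fun t ht n => ?_⟩
  set s := Real.sqrt t with hs
  have hs0 : 0 < s := Real.sqrt_pos.mpr ht
  set ψ : ℕ → ℝ → ℂ := fun k y => ((s ^ k / s : ℝ) : ℂ) * Gg k ((y + 1) * s) with hψ
  have hder : ∀ k < K, ∀ x : ℝ, 0 ≤ x → HasDerivAt (ψ k) (ψ (k + 1) x) x := by
    intro k _ x _
    have hinner : HasDerivAt (fun y : ℝ => (y + 1) * s) s x := by
      simpa using ((hasDerivAt_id x).add_const 1).mul_const s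
    have houter := hasDerivAt_Gg k ((x + 1) * s)
    have hcomp : HasDerivAt (fun y : ℝ => Gg k ((y + 1) * s))
        (s • Gg (k + 1) ((x + 1) * s)) x := by have := houter.scomp x hinner; exact this
    have := hcomp.const_mul ((s ^ k / s : ℝ) : ℂ)
    refine this.congr_deriv ?_
    rw [hψ]
    simp only [Complex.real_smul]
    push_cast
    have : (s : ℂ) ≠ 0 := Complex.ofReal_ne_zero.mpr hs0.ne'
    field_simp
    ring
  have hβmono : ∀ ⦃a b : ℝ⦄, 0 ≤ a → a ≤ b →
      s ^ K / s * D * Real.exp (-(b + 1) * s) ≤ s ^ K / s * D * Real.exp (-(a + 1) * s) := by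
    intro a b _ hab
    apply mul_le_mul_of_nonneg_left _ (by positivity)
    apply Real.exp_le_exp.mpr
    nlinarith
  have hbound : ∀ y : ℝ, 0 ≤ y → ‖ψ K y‖ ≤ s ^ K / s * D * Real.exp (-(y + 1) * s) := by
    intro y hy
    have hu : 0 ≤ (y + 1) * s := by positivity
    rw [hψ]
    simp only [norm_mul, Complex.norm_real]
    rw [Real.norm_of_nonneg (by positivity)]
    have hGg : ‖Gg K ((y + 1) * s)‖ ≤ D * Real.exp (-((y + 1) * s)) := by
      have h1 : ‖Gg K ((y + 1) * s)‖ =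
          ‖(Pg K).eval (((y + 1) * s : ℝ) : ℂ)‖ * Real.exp (-((y + 1) * s) ^ 2) := by
        rw [Gg, norm_mul]
        congr 1
        rw [Complex.norm_exp]
        norm_num
        rw [show ((y:ℂ)+1)*(s:ℂ) = (((y+1)*s : ℝ) : ℂ) by push_cast; ring,
          ← Complex.ofReal_pow, Complex.ofReal_re]
      rw [h1]
      have := hD ((y + 1) * s) hu
      simpa using this
    calc s ^ K / s * ‖Gg K ((y + 1) * s)‖ ≤ s ^ K / s * (D * Real.exp (-((y + 1) * s))) :=
          mul_le_mul_of_nonneg_left hGg (by positivity)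
    _ = s ^ K / s * D * Real.exp (-(y + 1) * s) := by ring_nf
  have hψ0 : htf t = fun n : ℕ => ψ 0 (n : ℝ) := by
    funext n
    rw [hψ, htf, φt]
    simp only [pow_zero, Gg, Pg]
    push_cast
    have h2 : ((s : ℂ)) ^ 2 = (t : ℂ) := by
      rw [← Complex.ofReal_pow]
      norm_cast
      rw [hs, Real.sq_sqrt ht.le]
    have hsne : (s : ℂ) ≠ 0 := Complex.ofReal_ne_zero.mpr hs0.ne'
    rw [Polynomial.eval_X]
    have harg : -(((n : ℝ) + 1) * s : ℂ) ^ 2 = -(((n : ℂ) + 1) ^ 2 * (t : ℂ)) := by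
      rw [mul_pow, h2]
      push_cast
      ring
    rw [mul_pow, h2]
    field_simp
  have key := dr_bound K ψ (fun y => s ^ K / s * D * Real.exp (-(y + 1) * s))
    hder hβmono hbound (n : ℝ) (Nat.cast_nonneg n)
  have hbridge : Dn^[K] (htf t) n = Dr^[K] (ψ 0) (n : ℝ) := by
    rw [hψ0]
    exact Dn_eq_Dr (ψ 0) K n
  rw [hbridge]
  calc ‖Dr^[K] (ψ 0) (n : ℝ)‖ ≤ s ^ K / s * D * Real.exp (-((n : ℝ) + 1) * s) := key
  _ = D * s ^ K / s * Real.exp (-((n : ℝ) + 1) * s) := by ring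




/-- real-variable version of the power weight -/
def φpow (s : ℂ) (y : ℝ) : ℂ := Complex.exp (-s * (Real.log (y + 1) : ℂ))

/-- ℕ-indexed power weight `(n+1)^(-s)` -/
def Hsf (s : ℂ) : ℕ → ℂ := fun n => φpow s n

lemma hs_Dn_bound (K : ℕ) (s : ℂ) (hsK : 0 ≤ s.re + K) (n : ℕ) :
    ‖Dn^[K] (Hsf s) n‖ ≤ (∏ i ∈ range K, ‖s + i‖) *
      Real.exp (-(s.re + K) * Real.log ((n : ℝ) + 1)) := by
  set ψ : ℕ → ℝ → ℂ := fun k y =>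
    (∏ i ∈ range k, -(s + i)) * Complex.exp (-(s + k) * (Real.log (y + 1) : ℂ)) with hψ
  have hder : ∀ k < K, ∀ x : ℝ, 0 ≤ x → HasDerivAt (ψ k) (ψ (k + 1) x) x := by
    intro k _ x hx
    have hx1 : (0 : ℝ) < x + 1 := by linarith
    have hinner : HasDerivAt (fun y : ℝ => Real.log (y + 1)) ((x + 1)⁻¹) x := by
      have := (Real.hasDerivAt_log hx1.ne').comp x ((hasDerivAt_id x).add_const 1)
      rw [mul_one] at this; exact this
    set c : ℂ := -(s + k) with hc
    have hmid : HasDerivAt (fun r : ℝ => Complex.exp (c * (r : ℂ)))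
        (Complex.exp (c * (Real.log (x + 1) : ℂ)) * c) (Real.log (x + 1)) := by
      have hz : HasDerivAt (fun z : ℂ => Complex.exp (c * z))
          (Complex.exp (c * (Real.log (x + 1) : ℂ)) * c) ((Real.log (x + 1) : ℝ) : ℂ) := by
        have := ((hasDerivAt_id ((Real.log (x + 1) : ℝ) : ℂ)).const_mul c).cexp
        simpa [mul_comm] using this
      exact hz.comp_ofReal
    have hcomp : HasDerivAt (fun y : ℝ => Complex.exp (c * (Real.log (y + 1) : ℂ)))
        ((x + 1)⁻¹ • (Complex.exp (c * (Real.log (x + 1) : ℂ)) * c)) x :=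
      by have := hmid.scomp x hinner; exact this
    have := hcomp.const_mul (∏ i ∈ range k, -(s + i))
    refine this.congr_deriv ?_
    rw [hψ]
    simp only [Finset.prod_range_succ, Complex.real_smul]
    have hexpinv : Complex.exp (-(Real.log (x + 1) : ℂ)) = (((x + 1)⁻¹ : ℝ) : ℂ) := by
      rw [← Complex.ofReal_neg, ← Complex.ofReal_exp, Real.exp_neg, Real.exp_log hx1]
    have hsplit : Complex.exp (-(s + (k + 1 : ℕ)) * (Real.log (x + 1) : ℂ)) =
        Complex.exp (c * (Real.log (x + 1) : ℂ)) * Complex.exp (-(Real.log (x + 1) : ℂ)) := by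
      rw [← Complex.exp_add]
      congr 1
      rw [hc]
      push_cast
      ring
    rw [hsplit, hexpinv]
    ring
  have hβmono : ∀ ⦃a b : ℝ⦄, 0 ≤ a → a ≤ b →
      (∏ i ∈ range K, ‖s + i‖) * Real.exp (-(s.re + K) * Real.log (b + 1)) ≤
        (∏ i ∈ range K, ‖s + i‖) * Real.exp (-(s.re + K) * Real.log (a + 1)) := by
    intro a b ha hab
    apply mul_le_mul_of_nonneg_left _ (Finset.prod_nonneg fun _ _ => norm_nonneg _)
    apply Real.exp_le_exp.mpr
    have hlog : Real.log (a + 1) ≤ Real.log (b + 1) := by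
      apply Real.log_le_log (by linarith) (by linarith)
    nlinarith
  have hbound : ∀ y : ℝ, 0 ≤ y → ‖ψ K y‖ ≤
      (∏ i ∈ range K, ‖s + i‖) * Real.exp (-(s.re + K) * Real.log (y + 1)) := by
    intro y hy
    rw [hψ]
    simp only [norm_mul]
    have h1 : ‖∏ i ∈ range K, -(s + i)‖ = ∏ i ∈ range K, ‖s + i‖ := by
      rw [norm_prod]
      apply Finset.prod_congr rfl
      intros; rw [norm_neg]
    have h2 : ‖Complex.exp (-(s + K) * (Real.log (y + 1) : ℂ))‖ =
        Real.exp (-(s.re + K) * Real.log (y + 1)) := by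
      rw [Complex.norm_exp]
      congr 1
      simp [Complex.mul_re, Complex.add_re, Complex.neg_re, Complex.ofReal_re,
        Complex.ofReal_im, Complex.natCast_re]
    rw [h1, h2]
  have hψ0 : Hsf s = fun n : ℕ => ψ 0 (n : ℝ) := by
    funext n
    rw [hψ, Hsf, φpow]
    simp
  rw [show Dn^[K] (Hsf s) n = Dr^[K] (ψ 0) (n : ℝ) by rw [hψ0]; exact Dn_eq_Dr (ψ 0) K n]
  exact dr_bound K ψ _ hder hβmono hbound (n : ℝ) (Nat.cast_nonneg n)

lemma diff_DnIter_Hs (j : ℕ) : ∀ n, Differentiable ℂ (fun s => Dn^[j] (Hsf s) n) := by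
  induction j with
  | zero =>
    intro n
    simp only [Function.iterate_zero, id_eq]
    have : (fun s => Hsf s n) = fun s => Complex.exp (-s * (Real.log ((n : ℝ) + 1) : ℂ)) := rfl
    rw [this]
    exact (differentiable_id.neg.mul_const _).cexp
  | succ j ih =>
    intro n
    have heq : (fun s => Dn^[j + 1] (Hsf s) n) =
        fun s => Dn^[j] (Hsf s) n - Dn^[j] (Hsf s) (n + 1) := by
      funext s
      rw [Function.iterate_succ_apply', Dn]
    rw [heq]
    exact (ih n).sub (ih (n + 1))





-- =========== new material ===========

lemma norm_Hsf (s : ℂ) (n : ℕ) :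
    ‖Hsf s n‖ = Real.exp (-s.re * Real.log ((n : ℝ) + 1)) := by
  rw [Hsf, φpow, Complex.norm_exp]
  congr 1
  simp [Complex.mul_re]

lemma summable_exp_neg_mul_log {a : ℝ} (ha : 1 < a) :
    Summable fun n : ℕ => Real.exp (-a * Real.log ((n : ℝ) + 1)) := by
  have key : ∀ n : ℕ, Real.exp (-a * Real.log ((n : ℝ) + 1)) = ((n : ℝ) + 1) ^ (-a : ℝ) := by
    intro n
    rw [Real.rpow_def_of_pos (by positivity), mul_comm]
  rw [funext key]
  have h1 : Summable fun n : ℕ => ((n : ℝ)) ^ (-a : ℝ) :=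
    Real.summable_nat_rpow.mpr (by linarith)
  have h2 := (summable_nat_add_iff 1).mpr h1
  apply h2.congr
  intro n
  push_cast
  rfl

lemma summable_norm_Hsf {s : ℂ} (hs : 1 < s.re) : Summable fun n => ‖Hsf s n‖ := by
  simp only [norm_Hsf]
  exact summable_exp_neg_mul_log hs

theorem Lval (χ : ℤ → ℂ) (M₀ : ℕ) (hM₀ : 0 < M₀)
    (L : ℂ → ℂ) (hL : Differentiable ℂ L)
    (hLs : ∀ s : ℂ, 1 < s.re → L s = ∑' n : ℕ, χ (n + 1) / ((n : ℂ) + 1) ^ s)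
    (hGood : Good M₀ (fun n : ℕ => χ ((n : ℤ) + 1)))
    (K : ℕ) (hK : 2 < K)
    (n' : ℕ) (hn' : 2 * n' + 1 + 1 < K) :
    L (-2 * (n' : ℂ) - 1) =
      ∑ j ∈ range K, mval M₀ ((stepc M₀)^[j] (fun n : ℕ => χ ((n : ℤ) + 1))) *
        Dn^[j] (fun m : ℕ => ((m : ℂ) + 1) ^ (2 * n' + 1)) 0 := by
  set c0 : ℕ → ℂ := fun n : ℕ => χ ((n : ℤ) + 1) with hc0
  set eK : ℕ → ℂ := (stepc M₀)^[K] c0 with heK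
  obtain ⟨Ce, hCe0, hCe⟩ := bound_of_periodic hM₀ ((hGood.iter hM₀ K).per)
  set mainF : ℂ → ℂ := fun s => ∑ j ∈ range K, mval M₀ ((stepc M₀)^[j] c0) *
    Dn^[j] (Hsf s) 0 with hmainF
  set remF : ℂ → ℂ := fun s => ∑' n, eK n * Dn^[K] (Hsf s) n with hremF
  set U : Set ℂ := {s : ℂ | 1 - (K : ℝ) < s.re} with hU
  have hUopen : IsOpen U := isOpen_lt continuous_const Complex.continuous_re
  -- each term bound, used twice
  have hterm_bound : ∀ (s : ℂ), 0 ≤ s.re + K → ∀ n,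
      ‖eK n * Dn^[K] (Hsf s) n‖ ≤ Ce * ((∏ i ∈ range K, ‖s + i‖) *
        Real.exp (-(s.re + K) * Real.log ((n : ℝ) + 1))) := by
    intro s hsK n
    rw [norm_mul]
    have h1 := hs_Dn_bound K s hsK n
    calc ‖eK n‖ * ‖Dn^[K] (Hsf s) n‖ ≤ Ce * ‖Dn^[K] (Hsf s) n‖ :=
          mul_le_mul_of_nonneg_right (hCe n) (norm_nonneg _)
    _ ≤ Ce * ((∏ i ∈ range K, ‖s + i‖) *
          Real.exp (-(s.re + K) * Real.log ((n : ℝ) + 1))) :=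
          mul_le_mul_of_nonneg_left h1 hCe0
  -- differentiability of remF on U
  have hremDiff : ∀ s₀ ∈ U, DifferentiableAt ℂ remF s₀ := by
    intro s₀ hs₀
    set r : ℝ := (s₀.re - (1 - (K : ℝ))) / 2 with hr
    have hrpos : 0 < r := by
      rw [hr]; simp only [hU, Set.mem_setOf_eq] at hs₀; linarith
    set σ₀ : ℝ := s₀.re - r with hσ₀
    have hσ₀K : 1 < σ₀ + K := by
      rw [hσ₀, hr]; simp only [hU, Set.mem_setOf_eq] at hs₀; linarith
    set B : ℝ := ‖s₀‖ + r + K with hB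
    have hball : DifferentiableOn ℂ remF (Metric.ball s₀ r) := by
      have hsum_u : Summable fun n : ℕ => Ce * (B ^ K *
          Real.exp (-(σ₀ + K) * Real.log ((n : ℝ) + 1))) :=
        ((summable_exp_neg_mul_log hσ₀K).mul_left _).mul_left _
      refine differentiableOn_tsum_of_summable_norm hsum_u
        (fun n => ((diff_DnIter_Hs K n).const_mul (eK n)).differentiableOn)
        Metric.isOpen_ball (fun n s hsball => ?_)
      · -- bound on the ball
        have hsre : σ₀ < s.re := by
          rw [Metric.mem_ball, Complex.dist_eq] at hsball
          have := Complex.abs_re_le_norm (s - s₀)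
          have h2 : |s.re - s₀.re| < r := by
            rw [← Complex.sub_re]; exact lt_of_le_of_lt this hsball
          rw [hσ₀]
          cases' abs_lt.mp h2 with h3 _
          linarith
        have hsK : 0 ≤ s.re + K := by linarith
        refine le_trans (hterm_bound s hsK n) ?_
        apply mul_le_mul_of_nonneg_left _ hCe0
        have hprod : (∏ i ∈ range K, ‖s + i‖) ≤ B ^ K := by
          have hsnorm : ‖s‖ ≤ ‖s₀‖ + r := by
            rw [Metric.mem_ball, Complex.dist_eq] at hsball
            have h5 : ‖s - s₀‖ < r := by exact hsball
            calc ‖s‖ = ‖s₀ + (s - s₀)‖ := by ring_nf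
            _ ≤ ‖s₀‖ + ‖s - s₀‖ := norm_add_le _ _
            _ ≤ ‖s₀‖ + r := by linarith
          have hB' : ∀ i ∈ range K, ‖s + (i : ℂ)‖ ≤ B := by
            intro i hi
            calc ‖s + (i : ℂ)‖ ≤ ‖s‖ + ‖(i : ℂ)‖ := norm_add_le _ _
            _ ≤ ‖s₀‖ + r + K := by
                have h6 : ‖(i : ℂ)‖ = (i : ℝ) := by simp
                have h7 : (i : ℝ) ≤ (K : ℝ) := by
                  exact_mod_cast (Finset.mem_range.mp hi).le
                rw [h6]; linarith
            _ = B := by rw [hB]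
          calc ∏ i ∈ range K, ‖s + i‖ ≤ ∏ _i ∈ range K, B :=
                Finset.prod_le_prod (fun _ _ => norm_nonneg _) hB'
          _ = B ^ K := by rw [Finset.prod_const, Finset.card_range]
        have hexp : Real.exp (-(s.re + K) * Real.log ((n : ℝ) + 1)) ≤
            Real.exp (-(σ₀ + K) * Real.log ((n : ℝ) + 1)) := by
          apply Real.exp_le_exp.mpr
          have hlog : 0 ≤ Real.log ((n : ℝ) + 1) :=
            Real.log_nonneg (by push_cast; linarith [Nat.cast_nonneg (α := ℝ) n])
          nlinarith
        calc (∏ i ∈ range K, ‖s + i‖) * Real.exp (-(s.re + K) * Real.log ((n : ℝ) + 1))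
            ≤ B ^ K * Real.exp (-(s.re + K) * Real.log ((n : ℝ) + 1)) := by
              apply mul_le_mul_of_nonneg_right hprod (by positivity)
        _ ≤ B ^ K * Real.exp (-(σ₀ + K) * Real.log ((n : ℝ) + 1)) := by
              apply mul_le_mul_of_nonneg_left hexp (by positivity)
    exact hball.differentiableAt (Metric.isOpen_ball.mem_nhds (Metric.mem_ball_self hrpos))
  -- agreement on re > 1
  have hagree : ∀ s : ℂ, 1 < s.re → L s = mainF s + remF s := by
    intro s hs
    have hsummable := summable_norm_Hsf hs
    have h1 : L s = ∑' n : ℕ, c0 n * Hsf s n := by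
      rw [hLs s hs]
      apply tsum_congr
      intro n
      rw [hc0, Hsf, φpow]
      have hne : ((n : ℂ) + 1) ≠ 0 := by
        have := Nat.cast_add_one_ne_zero (R := ℂ) n
        push_cast at this
        exact this
      have hcast : ((n : ℂ) + 1) = (((n : ℝ) + 1 : ℝ) : ℂ) := by push_cast; rfl
      rw [hcast, Complex.cpow_def_of_ne_zero (by rw [← hcast]; exact hne)]
      rw [← Complex.ofReal_log (by positivity)]
      rw [div_eq_mul_inv, ← Complex.exp_neg]
      congr 2
      push_cast
      ring
    rw [h1, abel_iter hM₀ hGood hsummable K]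
  -- identity theorem
  have hEq : Set.EqOn L (fun s => mainF s + remF s) U := by
    have hfa : AnalyticOnNhd ℂ L U := hL.differentiableOn.analyticOnNhd hUopen
    have hga : AnalyticOnNhd ℂ (fun s => mainF s + remF s) U := by
      refine DifferentiableOn.analyticOnNhd (fun s hs => ?_) hUopen
      apply DifferentiableAt.differentiableWithinAt
      apply DifferentiableAt.add
      · apply DifferentiableAt.fun_sum
        intro j _
        exact ((diff_DnIter_Hs j 0).differentiableAt).const_mul _
      · exact hremDiff s hs
    have h2U : (2 : ℂ) ∈ U := by
      rw [hU]; simp only [Set.mem_setOf_eq]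
      have : (0:ℝ) ≤ (K:ℝ) := Nat.cast_nonneg K
      have h2re : (2:ℂ).re = 2 := by norm_num
      rw [h2re]; linarith
    have hev : L =ᶠ[nhds (2 : ℂ)] fun s => mainF s + remF s := by
      have hopen1 : IsOpen {s : ℂ | 1 < s.re} := isOpen_lt continuous_const Complex.continuous_re
      refine eventually_of_mem (hopen1.mem_nhds ?_) (fun s hs => hagree s hs)
      simp only [Set.mem_setOf_eq]
      norm_num
    exact hfa.eqOn_of_preconnected_of_eventuallyEq hga
      ((convex_halfSpace_re_gt _).isPreconnected) h2U hev
  -- evaluate at s* = -2n'-1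
  set sstar : ℂ := -2 * (n' : ℂ) - 1 with hsstar
  have hsstar_re : sstar.re = -(2 * (n' : ℝ) + 1) := by
    rw [hsstar]; simp; ring
  have hsstarU : sstar ∈ U := by
    rw [hU]; simp only [Set.mem_setOf_eq, hsstar_re]
    have : (2 * n' + 1 + 1 : ℝ) < K := by exact_mod_cast hn'
    linarith
  have hLst := hEq hsstarU
  -- identify Hsf sstar with the polynomial function
  have hHsfPoly : Hsf sstar = fun m : ℕ => ((m : ℂ) + 1) ^ (2 * n' + 1) := by
    funext m
    rw [Hsf, φpow]
    have h1 : -sstar * (Real.log ((m : ℝ) + 1) : ℂ) =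
        ((2 * n' + 1 : ℕ) : ℂ) * (Real.log ((m : ℝ) + 1) : ℂ) := by
      rw [hsstar]; push_cast; ring
    rw [h1, Complex.exp_nat_mul, ← Complex.ofReal_exp, Real.exp_log (by positivity)]
    push_cast
    ring
  have hremZero : remF sstar = 0 := by
    simp only [hremF, hHsfPoly]
    have hz : ∀ n, eK n * Dn^[K] (fun m : ℕ => ((m : ℂ) + 1) ^ (2 * n' + 1)) n = 0 := by
      intro n
      set q : Polynomial ℂ := (Polynomial.X + 1) ^ (2 * n' + 1) with hq
      have hqeval : (fun m : ℕ => ((m : ℂ) + 1) ^ (2 * n' + 1)) =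
          fun m : ℕ => q.eval (m : ℂ) := by
        funext m; rw [hq]; simp
      have hmonic : (Polynomial.X + 1 : Polynomial ℂ).Monic := by
        have := Polynomial.monic_X_add_C (1 : ℂ)
        simpa using this
      have hqdeg : q.natDegree < K := by
        rw [hq, hmonic.natDegree_pow]
        have hdeg1 : (Polynomial.X + 1 : Polynomial ℂ).natDegree = 1 := by
          rw [show (Polynomial.X + 1 : Polynomial ℂ) = Polynomial.X + Polynomial.C 1 by simp]
          exact Polynomial.natDegree_X_add_C 1
        rw [hdeg1, mul_one]
        omega
      rw [hqeval, DnIter_poly_zero K q hqdeg n, mul_zero]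
    rw [funext hz]
    exact tsum_zero
  have hfinal : L sstar = mainF sstar + remF sstar := hEq hsstarU
  rw [hremZero, add_zero] at hfinal
  rw [hfinal]
  simp only [hmainF, hHsfPoly]





-- ================== norms of htf ==================

lemma norm_htf (t : ℝ) (ht : 0 < t) (n : ℕ) :
    ‖htf t n‖ = ((n : ℝ) + 1) * Real.exp (-(((n : ℝ) + 1) ^ 2 * t)) := by
  rw [htf, φt, norm_mul]
  congr 1
  · rw [show ((n : ℝ) : ℂ) + 1 = (((n : ℝ) + 1 : ℝ) : ℂ) by push_cast; rfl,
      Complex.norm_real, Real.norm_of_nonneg (by positivity)]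
  · rw [Complex.norm_exp]
    congr 1
    rw [show -((((n : ℝ) : ℂ) + 1) ^ 2 * (t : ℂ)) = ((-(((n : ℝ) + 1) ^ 2 * t) : ℝ) : ℂ) by
      push_cast; ring, Complex.ofReal_re]

lemma summable_norm_htf (t : ℝ) (ht : 0 < t) : Summable fun n => ‖htf t n‖ := by
  set r := Real.exp (-t) with hr
  have hr1 : r < 1 := by
    rw [hr]; exact Real.exp_lt_one_iff.mpr (by linarith)
  have hr0 : 0 ≤ r := le_of_lt (Real.exp_pos _)
  have hgeo : Summable fun n : ℕ => ((n : ℝ) + 1) * r ^ (n + 1) := by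
    have h1 := summable_pow_mul_geometric_of_norm_lt_one 1
      (show ‖r‖ < 1 by rwa [Real.norm_of_nonneg hr0])
    have h2 := (summable_nat_add_iff 1).mpr h1
    apply h2.congr
    intro n
    push_cast
    ring
  refine Summable.of_nonneg_of_le (fun n => norm_nonneg _) (fun n => ?_) hgeo
  rw [norm_htf t ht n]
  have h3 : Real.exp (-(((n : ℝ) + 1) ^ 2 * t)) ≤ r ^ (n + 1) := by
    have h4 : r ^ (n + 1) = Real.exp (-(((n : ℝ) + 1) * t)) := by
      rw [hr, ← Real.exp_nat_mul]
      congr 1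
      push_cast
      ring
    rw [h4]
    apply Real.exp_le_exp.mpr
    have h5 : (0 : ℝ) ≤ (n : ℝ) := Nat.cast_nonneg n
    nlinarith [mul_nonneg (mul_nonneg h5 ht.le) (by linarith : (0:ℝ) ≤ (n:ℝ) + 1)]
  calc ((n : ℝ) + 1) * Real.exp (-(((n : ℝ) + 1) ^ 2 * t)) ≤ ((n : ℝ) + 1) * r ^ (n + 1) :=
    mul_le_mul_of_nonneg_left h3 (by positivity)

lemma tsum_exp_bound (s : ℝ) (hs : 0 < s) :
    (Summable fun n : ℕ => Real.exp (-s) ^ (n + 1)) ∧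
      ∑' n : ℕ, Real.exp (-s) ^ (n + 1) ≤ 1 / s := by
  set r := Real.exp (-s) with hr
  have hr0 : 0 ≤ r := le_of_lt (Real.exp_pos _)
  have hr1 : r < 1 := Real.exp_lt_one_iff.mpr (by linarith)
  have hgeo : Summable fun n : ℕ => r ^ n := summable_geometric_of_lt_one hr0 hr1
  have hsummable : Summable fun n : ℕ => r ^ (n + 1) := by
    apply (hgeo.mul_right r).congr
    intro n
    rw [pow_succ]
  refine ⟨hsummable, ?_⟩
  have htsum : ∑' n : ℕ, r ^ (n + 1) = r * (1 - r)⁻¹ := by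
    have h1 : (fun n : ℕ => r ^ (n + 1)) = fun n : ℕ => r * r ^ n := by
      funext n; rw [pow_succ]; ring
    rw [h1, tsum_mul_left, tsum_geometric_of_lt_one hr0 hr1]
  rw [htsum]
  have h1r : 0 < 1 - r := by linarith
  have hkey : (s + 1) * r ≤ 1 := by
    have h2 : s + 1 ≤ Real.exp s := Real.add_one_le_exp s
    have h3 : r = (Real.exp s)⁻¹ := by rw [hr, Real.exp_neg]
    rw [h3]
    rw [mul_inv_le_iff₀ (Real.exp_pos s)]
    linarith
  have hineq : r * s ≤ 1 - r := by nlinarith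
  rw [← div_eq_mul_inv, div_le_div_iff₀ h1r hs]
  linarith

theorem partial_theta_asymptotic' (χ : ℤ → ℂ) (M₀ : ℕ) (hM₀ : 0 < M₀)
    (hper : ∀ n : ℤ, χ (n + M₀) = χ n)
    (hmean : ∑ n ∈ Finset.range M₀, χ (n + 1) = 0)
    (L : ℂ → ℂ) (hL : Differentiable ℂ L)
    (hLs : ∀ s : ℂ, 1 < s.re → L s = ∑' n : ℕ, χ (n + 1) / ((n : ℂ) + 1) ^ s) :
    ∀ M : ℕ,
      (fun t : ℝ =>
          (∑' n : ℕ, ((n : ℂ) + 1) * χ (n + 1) *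
              Complex.exp (-(((n : ℂ) + 1) ^ 2 * (t : ℂ)))) -
            ∑ n ∈ Finset.range (M + 1),
              (-1 : ℂ) ^ n * L (-2 * (n : ℂ) - 1) * (t : ℂ) ^ n / (n.factorial : ℂ))
        =O[nhdsWithin 0 (Set.Ioi 0)] fun t : ℝ => t ^ (M + 1) := by
  intro M
  set K : ℕ := 2 * M + 4 with hK
  set c0 : ℕ → ℂ := fun n : ℕ => χ ((n : ℤ) + 1) with hc0
  have hGood : Good M₀ c0 := by
    constructor
    · intro n
      rw [hc0]
      have h1 := hper ((n : ℤ) + 1)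
      simp only
      rw [← h1]
      congr 1
      push_cast
      ring
    · exact hmean
  obtain ⟨Ce, hCe0, hCe⟩ := bound_of_periodic hM₀ ((hGood.iter hM₀ K).per)
  obtain ⟨D, hD0, hD⟩ := gauss_Dn_bound K
  -- L-values
  have hLval : ∀ n' : ℕ, n' ≤ M →
      L (-2 * (n' : ℂ) - 1) = ∑ j ∈ range K, mval M₀ ((stepc M₀)^[j] c0) *
        Dn^[j] (fun m : ℕ => ((m : ℂ) + 1) ^ (2 * n' + 1)) 0 := by
    intro n' hn'
    exact Lval χ M₀ hM₀ L hL hLs hGood K (by omega) n' (by omega)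
  -- constants
  set errc : ℕ → ℝ := fun j => ∑ i ∈ range (j + 1),
    (2 : ℝ) ^ j * (((i : ℝ) + 1) ^ (2 * M + 3) * Real.exp (((i : ℝ) + 1) ^ 2)) with herrc
  have herrc0 : ∀ j, 0 ≤ errc j := by
    intro j; rw [herrc]; positivity
  set Cfin : ℝ := Ce * D + ∑ j ∈ range K, ‖mval M₀ ((stepc M₀)^[j] c0)‖ * errc j with hCfin
  rw [isBigO_iff]
  refine ⟨Cfin, ?_⟩
  filter_upwards [Ioo_mem_nhdsGT_of_mem (Set.left_mem_Ico.mpr zero_lt_one)] with t ht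
  obtain ⟨ht0, ht1⟩ := ht
  set sq : ℝ := Real.sqrt t with hsq
  have hsq0 : 0 < sq := Real.sqrt_pos.mpr ht0
  -- rewrite the theta sum
  have htheta : (∑' n : ℕ, ((n : ℂ) + 1) * χ (n + 1) *
      Complex.exp (-(((n : ℂ) + 1) ^ 2 * (t : ℂ)))) = ∑' n, c0 n * htf t n := by
    apply tsum_congr
    intro n
    rw [hc0, htf, φt]
    push_cast
    ring
  have hsum_ht := summable_norm_htf t ht0
  have hmain := abel_iter hM₀ hGood hsum_ht K
  -- remainder bound
  set Rem : ℂ := ∑' n, ((stepc M₀)^[K] c0) n * (Dn^[K] (htf t)) n with hRem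
  obtain ⟨hgeo_sum, hgeo_bound⟩ := tsum_exp_bound sq hsq0
  have hDnb := hD t ht0
  have hcoef0 : 0 ≤ D * sq ^ K / sq := by positivity
  have hSDn : Summable fun n => ‖Dn^[K] (htf t) n‖ := summable_norm_DnIter hsum_ht K
  have hRembound : ‖Rem‖ ≤ Ce * D * t ^ (M + 1) := by
    have hterm : ∀ n, ‖((stepc M₀)^[K] c0) n * (Dn^[K] (htf t)) n‖ ≤
        Ce * (D * sq ^ K / sq * Real.exp (-sq) ^ (n + 1)) := by
      intro n
      rw [norm_mul]
      have h1 : Real.exp (-(((n : ℝ) + 1)) * sq) = Real.exp (-sq) ^ (n + 1) := by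
        rw [← Real.exp_nat_mul]
        congr 1
        push_cast
        ring
      calc ‖((stepc M₀)^[K] c0) n‖ * ‖(Dn^[K] (htf t)) n‖
          ≤ Ce * ‖(Dn^[K] (htf t)) n‖ :=
            mul_le_mul_of_nonneg_right (hCe n) (norm_nonneg _)
      _ ≤ Ce * (D * sq ^ K / sq * Real.exp (-((n : ℝ) + 1) * sq)) :=
            mul_le_mul_of_nonneg_left (hDnb n) hCe0
      _ = Ce * (D * sq ^ K / sq * Real.exp (-sq) ^ (n + 1)) := by rw [← h1]
    have hsummul : Summable fun n => ‖((stepc M₀)^[K] c0) n * (Dn^[K] (htf t)) n‖ :=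
      Summable.of_nonneg_of_le (fun n => norm_nonneg _) hterm
        ((hgeo_sum.mul_left (D * sq ^ K / sq)).mul_left Ce)
    calc ‖Rem‖ ≤ ∑' n, ‖((stepc M₀)^[K] c0) n * (Dn^[K] (htf t)) n‖ :=
          norm_tsum_le_tsum_norm hsummul
    _ ≤ ∑' n, Ce * (D * sq ^ K / sq * Real.exp (-sq) ^ (n + 1)) :=
          Summable.tsum_le_tsum hterm hsummul ((hgeo_sum.mul_left (D * sq ^ K / sq)).mul_left Ce)
    _ = Ce * (D * sq ^ K / sq) * ∑' n, Real.exp (-sq) ^ (n + 1) := by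
          rw [← tsum_mul_left]
          apply tsum_congr
          intro n
          ring
    _ ≤ Ce * (D * sq ^ K / sq) * (1 / sq) := by
          apply mul_le_mul_of_nonneg_left hgeo_bound (by positivity)
    _ = Ce * D * (sq ^ K / (sq * sq)) := by field_simp
    _ = Ce * D * t ^ (M + 1) := by
          congr 1
          have h2 : sq * sq = t := Real.mul_self_sqrt ht0.le
          have h3 : sq ^ K = t ^ (M + 2) := by
            rw [hK, show 2 * M + 4 = 2 * (M + 2) by ring, pow_mul, Real.sq_sqrt ht0.le]
          rw [h2, h3, pow_succ]
          field_simp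
  -- error function and bounds
  set av : ℕ → ℂ := fun n' => (-1 : ℂ) ^ n' * (t : ℂ) ^ n' / (n'.factorial : ℂ) with hav
  set Pol : ℕ → ℕ → ℂ := fun n' m => ((m : ℂ) + 1) ^ (2 * n' + 1) with hPol
  set errf : ℕ → ℂ := fun m => htf t m - ∑ n' ∈ range (M + 1), av n' * Pol n' m with herrf
  have herr_bound : ∀ m : ℕ, ‖errf m‖ ≤
      (((m : ℝ) + 1) ^ (2 * M + 3) * Real.exp (((m : ℝ) + 1) ^ 2)) * t ^ (M + 1) := by
    intro m
    set z : ℂ := -(((m : ℂ) + 1) ^ 2 * (t : ℂ)) with hz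
    have hhtf : htf t m = ((m : ℂ) + 1) * Complex.exp z := by
      rw [htf, φt, hz]
      norm_cast
    have hterm : ∀ k ∈ range (M + 1), av k * Pol k m =
        ((m : ℂ) + 1) * (z ^ k / (k.factorial : ℂ)) := by
      intro k _
      rw [hav, hPol, hz]
      simp only
      rw [show (-(((m : ℂ) + 1) ^ 2 * (t : ℂ))) ^ k =
        (-1 : ℂ) ^ k * ((m : ℂ) + 1) ^ (2 * k) * (t : ℂ) ^ k by
          rw [neg_pow, mul_pow, ← pow_mul]; ring]
      rw [show 2 * k + 1 = 2 * k + 1 from rfl, pow_add, pow_mul]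
      have hfk : ((k.factorial : ℕ) : ℂ) ≠ 0 := Nat.cast_ne_zero.mpr k.factorial_ne_zero
      field_simp
    have heq : errf m = ((m : ℂ) + 1) *
        (Complex.exp z - ∑ k ∈ range (M + 1), z ^ k / (k.factorial : ℂ)) := by
      rw [herrf]
      simp only
      rw [mul_sub, Finset.mul_sum, hhtf, Finset.sum_congr rfl hterm]
    rw [heq, norm_mul]
    have hnormz : ‖z‖ = ((m : ℝ) + 1) ^ 2 * t := by
      rw [hz, norm_neg, norm_mul, norm_pow]
      rw [show ((m : ℕ) : ℂ) + 1 = (((m : ℝ) + 1 : ℝ) : ℂ) by push_cast; rfl,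
        Complex.norm_real, Real.norm_of_nonneg (by positivity),
        Complex.norm_real, Real.norm_of_nonneg ht0.le]
    have hnorm1 : ‖((m : ℂ) + 1)‖ = (m : ℝ) + 1 := by
      rw [show ((m : ℕ) : ℂ) + 1 = (((m : ℝ) + 1 : ℝ) : ℂ) by push_cast; rfl,
        Complex.norm_real, Real.norm_of_nonneg (by positivity)]
    have htail := exp_tail z M
    calc ‖((m : ℂ) + 1)‖ * ‖Complex.exp z - ∑ k ∈ range (M + 1), z ^ k / (k.factorial : ℂ)‖
        ≤ ((m : ℝ) + 1) * (‖z‖ ^ (M + 1) * Real.exp ‖z‖) := by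
          rw [hnorm1]
          exact mul_le_mul_of_nonneg_left htail (by positivity)
    _ ≤ ((m : ℝ) + 1) * ((((m : ℝ) + 1) ^ 2 * t) ^ (M + 1) * Real.exp (((m : ℝ) + 1) ^ 2)) := by
          rw [hnormz]
          apply mul_le_mul_of_nonneg_left _ (by positivity)
          apply mul_le_mul_of_nonneg_left _ (by positivity)
          apply Real.exp_le_exp.mpr
          nlinarith [sq_nonneg ((m : ℝ) + 1)]
    _ = (((m : ℝ) + 1) ^ (2 * M + 3) * Real.exp (((m : ℝ) + 1) ^ 2)) * t ^ (M + 1) := by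
          rw [mul_pow, ← pow_mul]
          ring_nf
  have hbrk : ∀ j, ‖Dn^[j] errf 0‖ ≤ errc j * t ^ (M + 1) := by
    intro j
    refine le_trans (DnIter_norm_le j errf 0) ?_
    rw [herrc]
    simp only
    rw [Finset.sum_mul]
    apply Finset.sum_le_sum
    intro i _
    rw [mul_assoc]
    apply mul_le_mul_of_nonneg_left _ (by positivity)
    simpa using herr_bound i
  -- the T sum identity
  have hT : (∑ n' ∈ range (M + 1), (-1 : ℂ) ^ n' * L (-2 * (n' : ℂ) - 1) * (t : ℂ) ^ n' /
      (n'.factorial : ℂ)) =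
      ∑ j ∈ range K, mval M₀ ((stepc M₀)^[j] c0) *
        (∑ n' ∈ range (M + 1), av n' * Dn^[j] (Pol n') 0) := by
    have h1 : ∀ n' ∈ range (M + 1),
        (-1 : ℂ) ^ n' * L (-2 * (n' : ℂ) - 1) * (t : ℂ) ^ n' / (n'.factorial : ℂ) =
        ∑ j ∈ range K, av n' * (mval M₀ ((stepc M₀)^[j] c0) * Dn^[j] (Pol n') 0) := by
      intro n' hn'
      rw [hLval n' (by have := Finset.mem_range.mp hn'; omega)]
      simp only [hPol, hav]
      rw [Finset.mul_sum, Finset.sum_mul, Finset.sum_div]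
      apply Finset.sum_congr rfl
      intro j _
      ring
    rw [Finset.sum_congr rfl h1, Finset.sum_comm]
    apply Finset.sum_congr rfl
    intro j _
    rw [Finset.mul_sum]
    apply Finset.sum_congr rfl
    intro n' _
    ring
  -- combine everything
  have hsplit : (∑' n, c0 n * htf t n) -
      (∑ n' ∈ range (M + 1), (-1 : ℂ) ^ n' * L (-2 * (n' : ℂ) - 1) * (t : ℂ) ^ n' /
        (n'.factorial : ℂ)) =
      Rem + ∑ j ∈ range K, mval M₀ ((stepc M₀)^[j] c0) * Dn^[j] errf 0 := by
    rw [hmain, hT]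
    have h2 : ∀ j ∈ range K,
        mval M₀ ((stepc M₀)^[j] c0) * Dn^[j] (htf t) 0 -
          mval M₀ ((stepc M₀)^[j] c0) * (∑ n' ∈ range (M + 1), av n' * Dn^[j] (Pol n') 0) =
        mval M₀ ((stepc M₀)^[j] c0) * Dn^[j] errf 0 := by
      intro j _
      rw [← mul_sub]
      congr 1
      have h3 : Dn^[j] errf 0 = Dn^[j] (htf t) 0 -
          Dn^[j] (fun m => ∑ n' ∈ range (M + 1), av n' * Pol n' m) 0 := by
        rw [herrf]
        exact DnIter_sub (htf t) _ j 0
      rw [h3, DnIter_sum (range (M + 1)) av Pol j 0]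
    calc (∑ j ∈ range K, mval M₀ ((stepc M₀)^[j] c0) * Dn^[j] (htf t) 0) + Rem -
          ∑ j ∈ range K, mval M₀ ((stepc M₀)^[j] c0) *
            (∑ n' ∈ range (M + 1), av n' * Dn^[j] (Pol n') 0)
        = Rem + ∑ j ∈ range K, (mval M₀ ((stepc M₀)^[j] c0) * Dn^[j] (htf t) 0 -
            mval M₀ ((stepc M₀)^[j] c0) *
              (∑ n' ∈ range (M + 1), av n' * Dn^[j] (Pol n') 0)) := by
          rw [Finset.sum_sub_distrib]
          ring
    _ = Rem + ∑ j ∈ range K, mval M₀ ((stepc M₀)^[j] c0) * Dn^[j] errf 0 := by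
          rw [Finset.sum_congr rfl h2]
  -- final estimate
  rw [htheta, hsplit]
  have hnormt : ‖t ^ (M + 1)‖ = t ^ (M + 1) := by
    rw [Real.norm_of_nonneg (by positivity)]
  rw [hnormt]
  calc ‖Rem + ∑ j ∈ range K, mval M₀ ((stepc M₀)^[j] c0) * Dn^[j] errf 0‖
      ≤ ‖Rem‖ + ‖∑ j ∈ range K, mval M₀ ((stepc M₀)^[j] c0) * Dn^[j] errf 0‖ :=
        norm_add_le _ _
  _ ≤ Ce * D * t ^ (M + 1) +
        ∑ j ∈ range K, ‖mval M₀ ((stepc M₀)^[j] c0)‖ * (errc j * t ^ (M + 1)) := by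
      apply add_le_add hRembound
      refine le_trans (norm_sum_le _ _) ?_
      apply Finset.sum_le_sum
      intro j _
      rw [norm_mul]
      exact mul_le_mul_of_nonneg_left (hbrk j) (norm_nonneg _)
  _ = Cfin * t ^ (M + 1) := by
      rw [hCfin, add_mul, Finset.sum_mul]
      congr 1
      apply Finset.sum_congr rfl
      intro j _
      ring
end

end PTA

open Complex Asymptotics

theorem partial_theta_asymptotic (χ : ℤ → ℂ) (M₀ : ℕ) (hM₀ : 0 < M₀)
    (hper : ∀ n : ℤ, χ (n + M₀) = χ n)
    (hmean : ∑ n ∈ Finset.range M₀, χ (n + 1) = 0)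
    (L : ℂ → ℂ) (hL : Differentiable ℂ L)
    (hLs : ∀ s : ℂ, 1 < s.re → L s = ∑' n : ℕ, χ (n + 1) / ((n : ℂ) + 1) ^ s) :
    ∀ M : ℕ,
      (fun t : ℝ =>
          (∑' n : ℕ, ((n : ℂ) + 1) * χ (n + 1) *
              Complex.exp (-(((n : ℂ) + 1) ^ 2 * (t : ℂ)))) -
            ∑ n ∈ Finset.range (M + 1),
              (-1 : ℂ) ^ n * L (-2 * (n : ℂ) - 1) * (t : ℂ) ^ n / (n.factorial : ℂ))
        =O[nhdsWithin 0 (Set.Ioi 0)] fun t : ℝ => t ^ (M + 1) :=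
  PTA.partial_theta_asymptotic' χ M₀ hM₀ hper hmean L hL hLs
end
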